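/- arXiv:gr-qc/9812064 — 4 statements merged into one kernel-verified Lean document; each statement's English description precedes it below -/
import Mathlib

section
/- Local existence at the event horizon (Lemma 1): Let Λ < 0, r_h > 0 and ω_h ∈ ℝ satisfy (ω_h² − 1)² < r_h²(1 − Λ r_h²). Then there exist ε > 0 and functions m, ω, S : [r_h, r_h + ε) → ℝ, continuous on [r_h, r_h + ε) and twice continuously differentiable on (r_h, r_h + ε), satisfying the field equations (E1)–(E3) on (r_h, r_h + ε), such that m(r_h) = r_h/2 − Λ r_h³/6, ω(r_h) = ω_h, S(r_h) = 1, N(r) > 0 for all r ∈ (r_h, r_h + ε), and ω is differentiable from the right at r_h with ω'(r_h) = (ω_h² − 1)ω_h / (r_h − Λ r_h³ − (ω_h² − 1)²/r_h). -/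
open Set Real MeasureTheory intervalIntegral

namespace EYM

/-! ### Generic helpers -/

lemma hasDerivAt_primitive {f : ℝ → ℝ} (hf : Continuous f) (a b : ℝ) :
    HasDerivAt (fun r => ∫ s in a..r, f s) (f b) b :=
  intervalIntegral.integral_hasDerivAt_right (hf.intervalIntegrable _ _)
    (hf.stronglyMeasurableAtFilter _ _) hf.continuousAt

lemma continuous_primitive {f : ℝ → ℝ} (hf : Continuous f) (a : ℝ) :
    Continuous (fun r => ∫ s in a..r, f s) :=
  intervalIntegral.continuous_primitive (fun _ _ => hf.intervalIntegrable _ _) a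

lemma exp_lipschitz {a b c : ℝ} (ha : a ≤ c) (hb : b ≤ c) :
    |exp a - exp b| ≤ exp c * |a - b| := by
  have key : ∀ x y : ℝ, x ≤ y → y ≤ c → exp y - exp x ≤ exp c * (y - x) := by
    intro x y hxy hyc
    have h1 : (x - y) + 1 ≤ exp (x - y) := Real.add_one_le_exp _
    have h2 : exp (x - y) * exp y = exp x := by rw [← exp_add]; ring_nf
    have h3 : exp y ≤ exp c := exp_le_exp.2 hyc
    nlinarith [exp_pos y, exp_pos x]
  rcases le_total a b with h | h
  · rw [abs_sub_comm, abs_of_nonneg (sub_nonneg.2 (exp_le_exp.2 h)), abs_sub_comm,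
      abs_of_nonneg (sub_nonneg.2 h)]
    exact key a b h hb
  · rw [abs_of_nonneg (sub_nonneg.2 (exp_le_exp.2 h)), abs_of_nonneg (sub_nonneg.2 h)]
    exact key b a h ha

/-! ### Definitions -/

section Defs
variable (Λ rh ωh : ℝ)

noncomputable def rho (s : ℝ) : ℝ := max s rh

noncomputable def KK : ℝ := (1 - Λ * rh ^ 2 - (ωh ^ 2 - 1) ^ 2 / rh ^ 2) / rh

noncomputable def vh : ℝ := (ωh ^ 2 - 1) * ωh / (rh ^ 2 * KK Λ rh ωh)

noncomputable def qf (x w : ℝ) : ℝ := (1 - Λ * x ^ 2 - (w ^ 2 - 1) ^ 2 / x ^ 2) / x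

variable (u : ℝ → ℝ)

noncomputable def Om (r : ℝ) : ℝ := ωh + ∫ s in rh..r, u s

noncomputable def pf (s : ℝ) : ℝ := (1 + 2 * (u s) ^ 2) / rho rh s

noncomputable def Pf (r : ℝ) : ℝ := ∫ s in rh..r, pf rh u s

noncomputable def Qf (r : ℝ) : ℝ :=
  ∫ s in rh..r, exp (Pf rh u s) * qf Λ (rho rh s) (Om rh ωh u s)

noncomputable def Nf (r : ℝ) : ℝ := exp (-(Pf rh u r)) * Qf Λ rh ωh u r

noncomputable def Gf (s : ℝ) : ℝ :=
  2 * rho rh s * Nf Λ rh ωh u s * u s * (1 - (u s) ^ 2)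
    + ((Om rh ωh u s) ^ 2 - 1) * Om rh ωh u s

noncomputable def Zf (r : ℝ) : ℝ := r ^ 2 * Nf Λ rh ωh u r

noncomputable def Z'f (r : ℝ) : ℝ :=
  2 * r * Nf Λ rh ωh u r
    + r ^ 2 * (qf Λ (rho rh r) (Om rh ωh u r) - pf rh u r * Nf Λ rh ωh u r)

noncomputable def Hf (s : ℝ) : ℝ := Gf Λ rh ωh u s - vh Λ rh ωh * Z'f Λ rh ωh u s

noncomputable def Tf (r : ℝ) : ℝ :=
  if r ≤ rh then vh Λ rh ωh else (∫ s in rh..r, Gf Λ rh ωh u s) / Zf Λ rh ωh u r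

end Defs

/-! ### Continuity and derivatives -/

section Calc
variable {Λ rh ωh : ℝ} {u : ℝ → ℝ}

lemma rho_pos (hrh : 0 < rh) (s : ℝ) : 0 < rho rh s := lt_of_lt_of_le hrh (le_max_right _ _)

lemma rho_ne (hrh : 0 < rh) (s : ℝ) : rho rh s ≠ 0 := (rho_pos hrh s).ne'

lemma continuous_rho : Continuous (rho rh) := continuous_id.max continuous_const

lemma rho_eq {s : ℝ} (h : rh ≤ s) : rho rh s = s := max_eq_left h

@[simp] lemma rho_rh : rho rh rh = rh := max_self rh

lemma continuous_Om (hu : Continuous u) : Continuous (Om rh ωh u) :=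
  continuous_const.add (continuous_primitive hu rh)

lemma continuous_pf (hrh : 0 < rh) (hu : Continuous u) : Continuous (pf rh u) := by
  refine Continuous.div (by fun_prop) (continuous_rho) (fun s => rho_ne hrh s)

lemma continuous_Pf (hrh : 0 < rh) (hu : Continuous u) : Continuous (Pf rh u) :=
  continuous_primitive (continuous_pf hrh hu) rh

lemma continuous_qf_comp (hrh : 0 < rh) (hu : Continuous u) : Continuous (fun s => qf Λ (rho rh s) (Om rh ωh u s)) := by
  unfold qf
  have h1 : Continuous (rho rh) := continuous_rho
  have h2 : Continuous (Om rh ωh u) := continuous_Om hu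
  refine Continuous.div ?_ h1 (fun s => rho_ne hrh s)
  refine Continuous.sub (Continuous.sub continuous_const (by fun_prop)) ?_
  exact Continuous.div (by fun_prop) (by fun_prop) (fun s => pow_ne_zero _ (rho_ne hrh s))

lemma continuous_Qint (hrh : 0 < rh) (hu : Continuous u) : Continuous (fun s => exp (Pf rh u s) * qf Λ (rho rh s) (Om rh ωh u s)) :=
  ((continuous_Pf hrh hu).rexp).mul (continuous_qf_comp hrh hu)

lemma continuous_Qf (hrh : 0 < rh) (hu : Continuous u) : Continuous (Qf Λ rh ωh u) :=
  continuous_primitive (continuous_Qint hrh hu) rh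

lemma continuous_Nf (hrh : 0 < rh) (hu : Continuous u) : Continuous (Nf Λ rh ωh u) :=
  ((continuous_Pf hrh hu).neg.rexp).mul (continuous_Qf hrh hu)

lemma continuous_Gf (hrh : 0 < rh) (hu : Continuous u) : Continuous (Gf Λ rh ωh u) := by
  unfold Gf
  have := continuous_Nf (Λ := Λ) (ωh := ωh) hrh hu
  have := continuous_Om (rh := rh) (ωh := ωh) hu
  have := continuous_rho (rh := rh)
  fun_prop

lemma continuous_Zf (hrh : 0 < rh) (hu : Continuous u) : Continuous (Zf Λ rh ωh u) := by
  unfold Zf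
  have := continuous_Nf (Λ := Λ) (ωh := ωh) hrh hu
  fun_prop

lemma continuous_Z'f (hrh : 0 < rh) (hu : Continuous u) : Continuous (Z'f Λ rh ωh u) := by
  unfold Z'f
  have := continuous_Nf (Λ := Λ) (ωh := ωh) hrh hu
  have := continuous_qf_comp (Λ := Λ) (ωh := ωh) hrh hu
  have := continuous_pf (rh := rh) (u := u) hrh hu
  fun_prop

lemma continuous_Hf (hrh : 0 < rh) (hu : Continuous u) : Continuous (Hf Λ rh ωh u) :=
  (continuous_Gf hrh hu).sub (continuous_const.mul (continuous_Z'f hrh hu))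

lemma hasDerivAt_Om (hu : Continuous u) (r : ℝ) : HasDerivAt (Om rh ωh u) (u r) r :=
  (hasDerivAt_primitive hu rh r).const_add ωh

lemma hasDerivAt_Pf (hrh : 0 < rh) (hu : Continuous u) (r : ℝ) : HasDerivAt (Pf rh u) (pf rh u r) r :=
  hasDerivAt_primitive (continuous_pf hrh hu) rh r

lemma hasDerivAt_Qf (hrh : 0 < rh) (hu : Continuous u) (r : ℝ) :
    HasDerivAt (Qf Λ rh ωh u) (exp (Pf rh u r) * qf Λ (rho rh r) (Om rh ωh u r)) r :=
  hasDerivAt_primitive (continuous_Qint hrh hu) rh r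

lemma hasDerivAt_Nf (hrh : 0 < rh) (hu : Continuous u) (r : ℝ) :
    HasDerivAt (Nf Λ rh ωh u)
      (qf Λ (rho rh r) (Om rh ωh u r) - pf rh u r * Nf Λ rh ωh u r) r := by
  have h1 : HasDerivAt (fun r => exp (-(Pf rh u r))) (-pf rh u r * exp (-(Pf rh u r))) r := by
    have := ((hasDerivAt_Pf hrh hu r).neg).exp
    simpa [mul_comm] using this
  have h2 := (h1.mul (hasDerivAt_Qf (Λ := Λ) (ωh := ωh) hrh hu r))
  have h3 : -pf rh u r * exp (-(Pf rh u r)) * Qf Λ rh ωh u r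
      + exp (-(Pf rh u r)) * (exp (Pf rh u r) * qf Λ (rho rh r) (Om rh ωh u r))
      = qf Λ (rho rh r) (Om rh ωh u r) - pf rh u r * Nf Λ rh ωh u r := by
    have : exp (-(Pf rh u r)) * exp (Pf rh u r) = 1 := by
      rw [← exp_add]; simp
    unfold Nf; linear_combination qf Λ (rho rh r) (Om rh ωh u r) * this
  rw [h3] at h2
  exact h2

lemma hasDerivAt_Zf (hrh : 0 < rh) (hu : Continuous u) (r : ℝ) :
    HasDerivAt (Zf Λ rh ωh u) (Z'f Λ rh ωh u r) r := by
  have h1 : HasDerivAt (fun r : ℝ => r ^ 2) (2 * r) r := by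
    simpa using (hasDerivAt_pow 2 r)
  have h2 := h1.mul (hasDerivAt_Nf (Λ := Λ) (ωh := ωh) hrh hu r)
  unfold Zf Z'f
  exact h2.congr_deriv (by ring)

@[simp] lemma Om_rh : Om rh ωh u rh = ωh := by simp [Om]

@[simp] lemma Pf_rh : Pf rh u rh = 0 := by simp [Pf]

@[simp] lemma Qf_rh : Qf Λ rh ωh u rh = 0 := by simp [Qf]

@[simp] lemma Nf_rh : Nf Λ rh ωh u rh = 0 := by simp [Nf]

@[simp] lemma Zf_rh : Zf Λ rh ωh u rh = 0 := by simp [Zf]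

lemma Zf_eq_integral (hrh : 0 < rh) (hu : Continuous u) (r : ℝ) :
    Zf Λ rh ωh u r = ∫ s in rh..r, Z'f Λ rh ωh u s := by
  have := intervalIntegral.integral_eq_sub_of_hasDerivAt
    (f := Zf Λ rh ωh u) (f' := Z'f Λ rh ωh u) (a := rh) (b := r)
    (fun x _ => hasDerivAt_Zf hrh hu x)
    ((continuous_Z'f hrh hu).intervalIntegrable _ _)
  rw [this]; simp

end Calc

/-! ### Integral estimate helpers -/

lemma abs_integral_le {f : ℝ → ℝ} {a r C : ℝ} (hr : a ≤ r)
    (h : ∀ s ∈ Set.Icc a r, |f s| ≤ C) : |∫ s in a..r, f s| ≤ C * (r - a) := by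
  have h1 : ∀ x ∈ Set.uIoc a r, ‖f x‖ ≤ C := by
    intro x hx
    rw [Set.uIoc_of_le hr] at hx
    exact h x ⟨hx.1.le, hx.2⟩
  have := intervalIntegral.norm_integral_le_of_norm_le_const h1
  rw [abs_of_nonneg (sub_nonneg.2 hr)] at this
  exact this

lemma integral_ge_const {f : ℝ → ℝ} {a r c : ℝ} (hr : a ≤ r) (hf : Continuous f)
    (h : ∀ s ∈ Set.Icc a r, c ≤ f s) : c * (r - a) ≤ ∫ s in a..r, f s := by
  have h1 : (∫ _ in a..r, c) ≤ ∫ s in a..r, f s :=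
    intervalIntegral.integral_mono_on hr intervalIntegrable_const
      (hf.intervalIntegrable _ _) h
  rw [intervalIntegral.integral_const, smul_eq_mul] at h1
  linarith

lemma integral_nonneg' {f : ℝ → ℝ} {a r : ℝ} (hr : a ≤ r)
    (h : ∀ s ∈ Set.Icc a r, 0 ≤ f s) : 0 ≤ ∫ s in a..r, f s :=
  intervalIntegral.integral_nonneg hr h

/-! ### Constants -/

section Consts
variable (Λ rh ωh : ℝ)

noncomputable def Bv : ℝ := |vh Λ rh ωh| + 1
noncomputable def Bom : ℝ := |ωh| + Bv Λ rh ωh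
noncomputable def Bp : ℝ := (1 + 2 * Bv Λ rh ωh ^ 2) / rh
noncomputable def Ep : ℝ := exp (Bp Λ rh ωh)
noncomputable def BN : ℝ := Ep Λ rh ωh * (2 * KK Λ rh ωh)
noncomputable def cN : ℝ := exp (-Bp Λ rh ωh) * (KK Λ rh ωh / 2)
noncomputable def cZ : ℝ := rh ^ 2 * cN Λ rh ωh
noncomputable def BG : ℝ :=
  2 * (rh + 1) * BN Λ rh ωh * (Bv Λ rh ωh * (1 + Bv Λ rh ωh ^ 2))
    + (Bom Λ rh ωh ^ 2 + 1) * Bom Λ rh ωh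
noncomputable def Lp : ℝ := 4 * Bv Λ rh ωh / rh
noncomputable def Lq : ℝ := 4 * (Bom Λ rh ωh ^ 2 + 1) * Bom Λ rh ωh / rh ^ 3
noncomputable def Lcube : ℝ := 3 * Bom Λ rh ωh ^ 2 + 1
noncomputable def LQ' : ℝ := (2 * KK Λ rh ωh * Lp Λ rh ωh + Lq Λ rh ωh) * Ep Λ rh ωh
noncomputable def LN : ℝ := Lp Λ rh ωh * Ep Λ rh ωh * (2 * KK Λ rh ωh) + LQ' Λ rh ωh
noncomputable def Lnu : ℝ := 1 + 3 * Bv Λ rh ωh ^ 2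
noncomputable def CG : ℝ :=
  2 * (rh + 1) * (BN Λ rh ωh * Lnu Λ rh ωh + LN Λ rh ωh * (Bv Λ rh ωh * (1 + Bv Λ rh ωh ^ 2)))
    + Lcube Λ rh ωh
noncomputable def Ctot : ℝ :=
  CG Λ rh ωh / cZ Λ rh ωh + BG Λ rh ωh * (rh + 1) ^ 2 * LN Λ rh ωh / cZ Λ rh ωh ^ 2

/-- membership in the ball of candidate functions -/
def Ball (u : ℝ → ℝ) : Prop :=
  Continuous u ∧ u rh = vh Λ rh ωh ∧ ∀ s, |u s - vh Λ rh ωh| ≤ 1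

/-- conditions on ε -/
def Eok (ε : ℝ) : Prop :=
  0 < ε ∧ ε ≤ 1 ∧
  (∀ x w, |x - rh| ≤ ε → |w - ωh| ≤ Bv Λ rh ωh * ε →
    |qf Λ x w - KK Λ rh ωh| ≤ KK Λ rh ωh / 2) ∧
  Ctot Λ rh ωh * ε ≤ 1 / 2 ∧
  (∀ s ∈ Set.Icc rh (rh + ε),
    |Hf Λ rh ωh (fun _ => vh Λ rh ωh) s| ≤ cZ Λ rh ωh / 2)

end Consts

section Basic
variable {Λ rh ωh : ℝ}

lemma KK_pos (hrh : 0 < rh) (hreg : (ωh ^ 2 - 1) ^ 2 < rh ^ 2 * (1 - Λ * rh ^ 2)) :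
    0 < KK Λ rh ωh := by
  have h2 : (ωh ^ 2 - 1) ^ 2 / rh ^ 2 < 1 - Λ * rh ^ 2 := by
    rw [div_lt_iff₀ (by positivity)]; nlinarith
  exact div_pos (by linarith) hrh

lemma rh2KK (hrh : 0 < rh) :
    rh ^ 2 * KK Λ rh ωh = rh - Λ * rh ^ 3 - (ωh ^ 2 - 1) ^ 2 / rh := by
  have h : rh ≠ 0 := hrh.ne'
  field_simp [KK]
  unfold KK
  field_simp

lemma qf_rh_eq : qf Λ rh ωh = KK Λ rh ωh := rfl

lemma vh_eq (hrh : 0 < rh) :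
    vh Λ rh ωh = (ωh ^ 2 - 1) * ωh / (rh - Λ * rh ^ 3 - (ωh ^ 2 - 1) ^ 2 / rh) := by
  rw [vh, rh2KK hrh]

lemma vh_Zeq (hrh : 0 < rh) (hK : 0 < KK Λ rh ωh) :
    vh Λ rh ωh * (rh ^ 2 * KK Λ rh ωh) = (ωh ^ 2 - 1) * ωh := by
  rw [vh]
  field_simp

lemma Bv_pos : 0 < Bv Λ rh ωh := by unfold Bv; positivity
lemma Bp_pos (hrh : 0 < rh) : 0 < Bp Λ rh ωh := by unfold Bp; positivity
lemma Bom_pos : 0 < Bom Λ rh ωh := lt_of_lt_of_le (Bv_pos) (le_add_of_nonneg_left (abs_nonneg _))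
lemma cN_pos (hK : 0 < KK Λ rh ωh) : 0 < cN Λ rh ωh := by unfold cN; positivity
lemma cZ_pos (hrh : 0 < rh) (hK : 0 < KK Λ rh ωh) : 0 < cZ Λ rh ωh := by
  have := cN_pos (Λ := Λ) (rh := rh) (ωh := ωh) hK
  unfold cZ; positivity

lemma ball_abs_le {u : ℝ → ℝ} (hb : Ball Λ rh ωh u) (s : ℝ) : |u s| ≤ Bv Λ rh ωh := by
  have h := hb.2.2 s
  unfold Bv
  have := abs_sub_abs_le_abs_sub (u s) (vh Λ rh ωh)
  have h3 := abs_abs_sub_abs_le_abs_sub (u s) (vh Λ rh ωh)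
  linarith [abs_nonneg (u s), neg_abs_le (|u s| - |vh Λ rh ωh|), abs_sub_abs_le_abs_sub (u s) (vh Λ rh ωh)]

end Basic

lemma amul {a b A B : ℝ} (ha : |a| ≤ A) (hb : |b| ≤ B) : |a * b| ≤ A * B := by
  rw [abs_mul]
  exact mul_le_mul ha hb (abs_nonneg _) (le_trans (abs_nonneg _) ha)

section Bounds
variable {Λ rh ωh ε : ℝ} {u : ℝ → ℝ}

lemma mem_sub {s r : ℝ} (hs : s ∈ Set.Icc rh r) (hr : r ∈ Set.Icc rh (rh + ε)) :
    s ∈ Set.Icc rh (rh + ε) := ⟨hs.1, le_trans hs.2 hr.2⟩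

lemma Om_dist (hb : Ball Λ rh ωh u) {s : ℝ} (hs : rh ≤ s) :
    |Om rh ωh u s - ωh| ≤ Bv Λ rh ωh * (s - rh) := by
  have : Om rh ωh u s - ωh = ∫ t in rh..s, u t := by unfold Om; ring
  rw [this]
  exact abs_integral_le hs (fun t _ => ball_abs_le hb t)

lemma Om_dist' (hb : Ball Λ rh ωh u) {s : ℝ} (hs : s ∈ Set.Icc rh (rh + ε)) :
    |Om rh ωh u s - ωh| ≤ Bv Λ rh ωh * ε := by
  refine le_trans (Om_dist hb hs.1) ?_
  have := Bv_pos (Λ := Λ) (rh := rh) (ωh := ωh)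
  nlinarith [hs.2]

lemma Om_abs (hb : Ball Λ rh ωh u) (hε1 : ε ≤ 1) {s : ℝ} (hs : s ∈ Set.Icc rh (rh + ε)) :
    |Om rh ωh u s| ≤ Bom Λ rh ωh := by
  have h1 := Om_dist' hb hs
  have h2 : Bv Λ rh ωh * ε ≤ Bv Λ rh ωh := by
    nlinarith [Bv_pos (Λ := Λ) (rh := rh) (ωh := ωh)]
  unfold Bom
  have := abs_sub_abs_le_abs_sub (Om rh ωh u s) ωh
  have h4 : |Om rh ωh u s| - |ωh| ≤ |Om rh ωh u s - ωh| := this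
  linarith

lemma qf_band (hrh : 0 < rh) (he : Eok Λ rh ωh ε) (hb : Ball Λ rh ωh u)
    {s : ℝ} (hs : s ∈ Set.Icc rh (rh + ε)) :
    KK Λ rh ωh / 2 ≤ qf Λ (rho rh s) (Om rh ωh u s) ∧
      qf Λ (rho rh s) (Om rh ωh u s) ≤ 2 * KK Λ rh ωh := by
  have hρ : rho rh s = s := rho_eq hs.1
  have hx : |s - rh| ≤ ε := by
    rw [abs_of_nonneg (by linarith [hs.1])]; linarith [hs.2]
  have h := he.2.2.1 s (Om rh ωh u s) hx (Om_dist' hb hs)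
  rw [hρ]
  rw [abs_le] at h
  constructor <;> linarith

lemma pf_nonneg (hrh : 0 < rh) (s : ℝ) : 0 ≤ pf rh u s := by
  unfold pf
  have := rho_pos (rh := rh) hrh s
  positivity

lemma sq_le_of_abs_le {a A : ℝ} (h : |a| ≤ A) : a ^ 2 ≤ A ^ 2 := by
  have := abs_nonneg a
  nlinarith [sq_abs a]

lemma pf_le (hrh : 0 < rh) (hb : Ball Λ rh ωh u) (s : ℝ) : pf rh u s ≤ Bp Λ rh ωh := by
  unfold pf Bp
  have h1 := rho_pos (rh := rh) hrh s
  have h2 : rh ≤ rho rh s := le_max_right _ _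
  have h4 : u s ^ 2 ≤ Bv Λ rh ωh ^ 2 := sq_le_of_abs_le (ball_abs_le hb s)
  exact div_le_div₀ (by nlinarith [Bv_pos (Λ := Λ) (rh := rh) (ωh := ωh)]) (by linarith) hrh h2

lemma Pf_nonneg (hrh : 0 < rh) (hu : Continuous u) {r : ℝ} (hr : rh ≤ r) :
    0 ≤ Pf rh u r :=
  integral_nonneg' hr (fun s _ => pf_nonneg hrh s)

lemma Pf_le (hrh : 0 < rh) (hu : Continuous u) (hb : Ball Λ rh ωh u) (hε1 : ε ≤ 1)
    {r : ℝ} (hr : r ∈ Set.Icc rh (rh + ε)) : Pf rh u r ≤ Bp Λ rh ωh := by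
  have h1 : |Pf rh u r| ≤ Bp Λ rh ωh * (r - rh) :=
    abs_integral_le hr.1 (fun s _ => by
      rw [abs_of_nonneg (pf_nonneg hrh s)]; exact pf_le hrh hb s)
  have h2 := le_of_abs_le h1
  have hBp := Bp_pos (Λ := Λ) (ωh := ωh) hrh
  nlinarith [hr.1, hr.2]

lemma Qf_upper (hrh : 0 < rh) (hK : 0 < KK Λ rh ωh) (hu : Continuous u) (he : Eok Λ rh ωh ε)
    (hb : Ball Λ rh ωh u) {r : ℝ} (hr : r ∈ Set.Icc rh (rh + ε)) :
    |Qf Λ rh ωh u r| ≤ BN Λ rh ωh * (r - rh) := by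
  refine abs_integral_le hr.1 (fun s hs => ?_)
  have hs' := mem_sub hs hr
  have hband := qf_band hrh he hb hs'
  have hq : |qf Λ (rho rh s) (Om rh ωh u s)| ≤ 2 * KK Λ rh ωh := by
    rw [abs_of_nonneg (by linarith [hband.1])]
    exact hband.2
  have hPle := Pf_le hrh hu hb he.2.1 hs'
  have hexp : |exp (Pf rh u s)| ≤ Ep Λ rh ωh := by
    rw [abs_of_nonneg (exp_nonneg _)]
    exact exp_le_exp.2 hPle
  exact amul hexp hq

lemma Qf_lower (hrh : 0 < rh) (hu : Continuous u) (he : Eok Λ rh ωh ε)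
    (hb : Ball Λ rh ωh u) {r : ℝ} (hr : r ∈ Set.Icc rh (rh + ε)) :
    KK Λ rh ωh / 2 * (r - rh) ≤ Qf Λ rh ωh u r := by
  refine integral_ge_const hr.1 (continuous_Qint hrh hu) (fun s hs => ?_)
  have hs' := mem_sub hs hr
  have hband := qf_band hrh he hb hs'
  have hexp : 1 ≤ exp (Pf rh u s) := by
    rw [← exp_zero]
    exact exp_le_exp.2 (Pf_nonneg hrh hu hs'.1)
  nlinarith [hband.1, exp_pos (Pf rh u s)]

lemma Nf_upper (hrh : 0 < rh) (hK : 0 < KK Λ rh ωh) (hu : Continuous u) (he : Eok Λ rh ωh ε)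
    (hb : Ball Λ rh ωh u) {r : ℝ} (hr : r ∈ Set.Icc rh (rh + ε)) :
    |Nf Λ rh ωh u r| ≤ BN Λ rh ωh * (r - rh) := by
  unfold Nf
  have h1 : |exp (-Pf rh u r)| ≤ 1 := by
    rw [abs_of_nonneg (exp_nonneg _), ← exp_zero]
    exact exp_le_exp.2 (by linarith [Pf_nonneg hrh hu hr.1])
  have := amul h1 (Qf_upper hrh hK hu he hb hr)
  simpa using this

lemma Nf_lower (hrh : 0 < rh) (hK : 0 < KK Λ rh ωh) (hu : Continuous u) (he : Eok Λ rh ωh ε)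
    (hb : Ball Λ rh ωh u) {r : ℝ} (hr : r ∈ Set.Icc rh (rh + ε)) :
    cN Λ rh ωh * (r - rh) ≤ Nf Λ rh ωh u r := by
  unfold Nf cN
  have h1 : exp (-Bp Λ rh ωh) ≤ exp (-Pf rh u r) :=
    exp_le_exp.2 (by linarith [Pf_le hrh hu hb he.2.1 hr])
  have h2 := Qf_lower hrh hu he hb hr
  have hQ0 : 0 ≤ Qf Λ rh ωh u r := le_trans (by nlinarith [hr.1]) h2
  nlinarith [exp_pos (-Pf rh u r), exp_pos (-Bp Λ rh ωh), h2, hr.1,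
    mul_le_mul_of_nonneg_right h1 hQ0]

lemma Zf_lower (hrh : 0 < rh) (hK : 0 < KK Λ rh ωh) (hu : Continuous u) (he : Eok Λ rh ωh ε)
    (hb : Ball Λ rh ωh u) {r : ℝ} (hr : r ∈ Set.Icc rh (rh + ε)) :
    cZ Λ rh ωh * (r - rh) ≤ Zf Λ rh ωh u r := by
  unfold Zf cZ
  have h1 := Nf_lower hrh hK hu he hb hr
  have h2 : rh ^ 2 ≤ r ^ 2 := by nlinarith [hr.1]
  have hcN := cN_pos (Λ := Λ) (rh := rh) (ωh := ωh) hK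
  rcases le_or_gt (r - rh) 0 with h | h
  · have : r = rh := by linarith [hr.1]
    subst this
    simp [Nf]
  · have h3 : 0 < Nf Λ rh ωh u r := lt_of_lt_of_le (by positivity) h1
    nlinarith [mul_le_mul_of_nonneg_right h2 h3.le,
      mul_le_mul_of_nonneg_left h1 (sq_nonneg rh)]

lemma Zf_pos (hrh : 0 < rh) (hK : 0 < KK Λ rh ωh) (hu : Continuous u) (he : Eok Λ rh ωh ε)
    (hb : Ball Λ rh ωh u) {r : ℝ} (hr : r ∈ Set.Icc rh (rh + ε)) (hgt : rh < r) :
    0 < Zf Λ rh ωh u r :=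
  lt_of_lt_of_le (by nlinarith [cZ_pos (Λ := Λ) (ωh := ωh) hrh hK]) (Zf_lower hrh hK hu he hb hr)

lemma Zf_upper (hrh : 0 < rh) (hK : 0 < KK Λ rh ωh) (hu : Continuous u) (he : Eok Λ rh ωh ε)
    (hb : Ball Λ rh ωh u) {r : ℝ} (hr : r ∈ Set.Icc rh (rh + ε)) :
    |Zf Λ rh ωh u r| ≤ (rh + 1) ^ 2 * BN Λ rh ωh * (r - rh) := by
  unfold Zf
  have h1 : |r ^ 2| ≤ (rh + 1) ^ 2 := by
    rw [abs_of_nonneg (sq_nonneg r)]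
    have := hr.1; have := hr.2; have := he.2.1
    nlinarith
  have := amul h1 (Nf_upper hrh hK hu he hb hr)
  calc |r ^ 2 * Nf Λ rh ωh u r| ≤ (rh + 1) ^ 2 * (BN Λ rh ωh * (r - rh)) := this
    _ = (rh + 1) ^ 2 * BN Λ rh ωh * (r - rh) := by ring

lemma Gf_abs (hrh : 0 < rh) (hK : 0 < KK Λ rh ωh) (hu : Continuous u) (he : Eok Λ rh ωh ε)
    (hb : Ball Λ rh ωh u) {s : ℝ} (hs : s ∈ Set.Icc rh (rh + ε)) :
    |Gf Λ rh ωh u s| ≤ BG Λ rh ωh := by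
  unfold Gf
  have hρ : rho rh s = s := rho_eq hs.1
  have h2ρ : |2 * rho rh s| ≤ 2 * (rh + 1) := by
    rw [hρ, abs_of_nonneg (by linarith [hs.1] : (0:ℝ) ≤ 2 * s)]
    have := hs.2; have := he.2.1
    linarith
  have hN : |Nf Λ rh ωh u s| ≤ BN Λ rh ωh := by
    refine le_trans (Nf_upper hrh hK hu he hb hs) ?_
    have hBN : 0 ≤ BN Λ rh ωh := by
      unfold BN Ep
      positivity
    nlinarith [hs.1, hs.2, he.2.1]
  have hv := ball_abs_le hb s
  have h1u : |1 - u s ^ 2| ≤ 1 + Bv Λ rh ωh ^ 2 := by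
    have := sq_le_of_abs_le hv
    rw [abs_sub_comm]
    refine le_trans (abs_sub (u s ^ 2) 1) ?_
    rw [abs_of_nonneg (sq_nonneg (u s)), abs_one]
    linarith
  have hOm := Om_abs hb he.2.1 hs
  have hcube : |(Om rh ωh u s ^ 2 - 1) * Om rh ωh u s| ≤
      (Bom Λ rh ωh ^ 2 + 1) * Bom Λ rh ωh := by
    refine amul ?_ hOm
    refine le_trans (abs_sub _ _) ?_
    rw [abs_of_nonneg (sq_nonneg (Om rh ωh u s)), abs_one]
    linarith [sq_le_of_abs_le hOm]
  refine le_trans (abs_add_le _ _) ?_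
  unfold BG
  have hmain := amul (amul (amul h2ρ hN) hv) h1u
  nlinarith [hmain, hcube]

end Bounds

/-! ### Contraction estimates -/

section Contraction
variable {Λ rh ωh ε d : ℝ} {u₁ u₂ : ℝ → ℝ}

lemma Om_diff (hd : ∀ s ∈ Set.Icc rh (rh + ε), |u₁ s - u₂ s| ≤ d)
    {s : ℝ} (hs : s ∈ Set.Icc rh (rh + ε))
    (h1 : Continuous u₁) (h2 : Continuous u₂) :
    |Om rh ωh u₁ s - Om rh ωh u₂ s| ≤ d * (s - rh) := by
  have heq : Om rh ωh u₁ s - Om rh ωh u₂ s = ∫ t in rh..s, (u₁ t - u₂ t) := by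
    unfold Om
    rw [intervalIntegral.integral_sub (h1.intervalIntegrable _ _) (h2.intervalIntegrable _ _)]
    ring
  rw [heq]
  exact abs_integral_le hs.1 (fun t ht => hd t (mem_sub ht hs))

lemma Lp_nonneg (hrh : 0 < rh) : 0 ≤ Lp Λ rh ωh := by
  unfold Lp
  have := Bv_pos (Λ := Λ) (rh := rh) (ωh := ωh)
  positivity

lemma pf_diff (hrh : 0 < rh) (hb₁ : Ball Λ rh ωh u₁) (hb₂ : Ball Λ rh ωh u₂)
    (hd0 : 0 ≤ d) (hd : ∀ s ∈ Set.Icc rh (rh + ε), |u₁ s - u₂ s| ≤ d)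
    {s : ℝ} (hs : s ∈ Set.Icc rh (rh + ε)) :
    |pf rh u₁ s - pf rh u₂ s| ≤ Lp Λ rh ωh * d := by
  have heq : pf rh u₁ s - pf rh u₂ s
      = 2 * ((u₁ s + u₂ s) * (u₁ s - u₂ s)) / rho rh s := by
    unfold pf
    rw [div_sub_div_same]
    ring_nf
  rw [heq, Lp, abs_div]
  have hρ := rho_pos (rh := rh) hrh s
  have hρ2 : rh ≤ rho rh s := le_max_right _ _
  rw [abs_of_pos hρ]
  have hnum : |2 * ((u₁ s + u₂ s) * (u₁ s - u₂ s))| ≤ 4 * Bv Λ rh ωh * d := by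
    rw [abs_mul, abs_two, abs_mul]
    have ha : |u₁ s + u₂ s| ≤ 2 * Bv Λ rh ωh :=
      le_trans (abs_add_le _ _) (by linarith [ball_abs_le hb₁ s, ball_abs_le hb₂ s])
    have hb : |u₁ s - u₂ s| ≤ d := hd s hs
    have hBv := Bv_pos (Λ := Λ) (rh := rh) (ωh := ωh)
    nlinarith [abs_nonneg (u₁ s + u₂ s), abs_nonneg (u₁ s - u₂ s),
      mul_le_mul ha hb (abs_nonneg _) (by linarith)]
  calc |2 * ((u₁ s + u₂ s) * (u₁ s - u₂ s))| / rho rh s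
      ≤ (4 * Bv Λ rh ωh * d) / rh := by
        refine div_le_div₀ ?_ hnum hrh hρ2
        have hBv := Bv_pos (Λ := Λ) (rh := rh) (ωh := ωh)
        nlinarith
    _ = 4 * Bv Λ rh ωh / rh * d := by ring

lemma Pf_diff (hrh : 0 < rh) (hb₁ : Ball Λ rh ωh u₁) (hb₂ : Ball Λ rh ωh u₂)
    (hd0 : 0 ≤ d) (hd : ∀ s ∈ Set.Icc rh (rh + ε), |u₁ s - u₂ s| ≤ d)
    {r : ℝ} (hr : r ∈ Set.Icc rh (rh + ε)) :
    |Pf rh u₁ r - Pf rh u₂ r| ≤ Lp Λ rh ωh * d * (r - rh) := by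
  have heq : Pf rh u₁ r - Pf rh u₂ r = ∫ s in rh..r, (pf rh u₁ s - pf rh u₂ s) := by
    unfold Pf
    rw [intervalIntegral.integral_sub
      ((continuous_pf hrh hb₁.1).intervalIntegrable _ _)
      ((continuous_pf hrh hb₂.1).intervalIntegrable _ _)]
  rw [heq]
  exact abs_integral_le hr.1 (fun t ht => pf_diff hrh hb₁ hb₂ hd0 hd (mem_sub ht hr))

lemma Pf_diff' (hrh : 0 < rh) (hb₁ : Ball Λ rh ωh u₁) (hb₂ : Ball Λ rh ωh u₂)
    (hd0 : 0 ≤ d) (hd : ∀ s ∈ Set.Icc rh (rh + ε), |u₁ s - u₂ s| ≤ d)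
    {r : ℝ} (hr : r ∈ Set.Icc rh (rh + ε)) :
    |Pf rh u₁ r - Pf rh u₂ r| ≤ Lp Λ rh ωh * d * ε := by
  refine le_trans (Pf_diff hrh hb₁ hb₂ hd0 hd hr) ?_
  have hLp := Lp_nonneg (Λ := Λ) (ωh := ωh) hrh
  calc Lp Λ rh ωh * d * (r - rh) = Lp Λ rh ωh * d * (r - rh) := rfl
    _ ≤ Lp Λ rh ωh * d * ε :=
      mul_le_mul_of_nonneg_left (by linarith [hr.2]) (mul_nonneg hLp hd0)

lemma Ep_pos : 0 < Ep Λ rh ωh := exp_pos _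
lemma Lq_nonneg (hrh : 0 < rh) : 0 ≤ Lq Λ rh ωh := by
  unfold Lq
  have h1 := Bom_pos (Λ := Λ) (rh := rh) (ωh := ωh)
  positivity
lemma LQ'_nonneg (hrh : 0 < rh) (hK : 0 < KK Λ rh ωh) : 0 ≤ LQ' Λ rh ωh := by
  have h1 := Lq_nonneg (Λ := Λ) (ωh := ωh) hrh
  have h2 := Lp_nonneg (Λ := Λ) (ωh := ωh) hrh
  have h3 := Ep_pos (Λ := Λ) (rh := rh) (ωh := ωh)
  unfold LQ'
  positivity
lemma LN_nonneg (hrh : 0 < rh) (hK : 0 < KK Λ rh ωh) : 0 ≤ LN Λ rh ωh := by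
  have h1 := LQ'_nonneg (Λ := Λ) (ωh := ωh) hrh hK
  have h2 := Lp_nonneg (Λ := Λ) (ωh := ωh) hrh
  have h3 := Ep_pos (Λ := Λ) (rh := rh) (ωh := ωh)
  unfold LN
  positivity
lemma BN_nonneg (hK : 0 < KK Λ rh ωh) : 0 ≤ BN Λ rh ωh := by
  have h3 := Ep_pos (Λ := Λ) (rh := rh) (ωh := ωh)
  unfold BN
  positivity

lemma expP_diff (hrh : 0 < rh) (he : Eok Λ rh ωh ε)
    (hb₁ : Ball Λ rh ωh u₁) (hb₂ : Ball Λ rh ωh u₂)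
    (hd0 : 0 ≤ d) (hd : ∀ s ∈ Set.Icc rh (rh + ε), |u₁ s - u₂ s| ≤ d)
    {r : ℝ} (hr : r ∈ Set.Icc rh (rh + ε)) :
    |exp (Pf rh u₁ r) - exp (Pf rh u₂ r)| ≤ Ep Λ rh ωh * (Lp Λ rh ωh * d * ε) := by
  refine le_trans (exp_lipschitz (Pf_le hrh hb₁.1 hb₁ he.2.1 hr)
    (Pf_le hrh hb₂.1 hb₂ he.2.1 hr)) ?_
  exact mul_le_mul_of_nonneg_left (Pf_diff' hrh hb₁ hb₂ hd0 hd hr) (exp_nonneg _)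

lemma expNegP_diff (hrh : 0 < rh) (he : Eok Λ rh ωh ε)
    (hb₁ : Ball Λ rh ωh u₁) (hb₂ : Ball Λ rh ωh u₂)
    (hd0 : 0 ≤ d) (hd : ∀ s ∈ Set.Icc rh (rh + ε), |u₁ s - u₂ s| ≤ d)
    {r : ℝ} (hr : r ∈ Set.Icc rh (rh + ε)) :
    |exp (-Pf rh u₁ r) - exp (-Pf rh u₂ r)| ≤ Lp Λ rh ωh * d * ε := by
  have h1 : -Pf rh u₁ r ≤ 0 := by linarith [Pf_nonneg hrh hb₁.1 hr.1]
  have h2 : -Pf rh u₂ r ≤ 0 := by linarith [Pf_nonneg hrh hb₂.1 hr.1]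
  have := exp_lipschitz h1 h2
  rw [exp_zero, one_mul] at this
  refine le_trans this ?_
  have : |-Pf rh u₁ r - -Pf rh u₂ r| = |Pf rh u₁ r - Pf rh u₂ r| := by
    rw [← abs_neg]; ring_nf
  rw [this]
  exact Pf_diff' hrh hb₁ hb₂ hd0 hd hr

lemma qf_diff (hrh : 0 < rh) (he : Eok Λ rh ωh ε)
    (hb₁ : Ball Λ rh ωh u₁) (hb₂ : Ball Λ rh ωh u₂)
    (hd0 : 0 ≤ d) (hd : ∀ s ∈ Set.Icc rh (rh + ε), |u₁ s - u₂ s| ≤ d)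
    {s : ℝ} (hs : s ∈ Set.Icc rh (rh + ε)) :
    |qf Λ (rho rh s) (Om rh ωh u₁ s) - qf Λ (rho rh s) (Om rh ωh u₂ s)|
      ≤ Lq Λ rh ωh * (d * ε) := by
  set w₁ := Om rh ωh u₁ s
  set w₂ := Om rh ωh u₂ s
  have hρ := rho_pos (rh := rh) hrh s
  have hρ2 : rh ≤ rho rh s := le_max_right _ _
  have heq : qf Λ (rho rh s) w₁ - qf Λ (rho rh s) w₂
      = ((w₂ ^ 2 - 1) + (w₁ ^ 2 - 1)) * ((w₂ + w₁) * (w₂ - w₁))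
        / (rho rh s ^ 2 * rho rh s) := by
    unfold qf
    field_simp
    ring
  have hw₁ : |w₁| ≤ Bom Λ rh ωh := Om_abs hb₁ he.2.1 hs
  have hw₂ : |w₂| ≤ Bom Λ rh ωh := Om_abs hb₂ he.2.1 hs
  have hΔ : |w₂ - w₁| ≤ d * ε := by
    rw [abs_sub_comm]
    have h1 := Om_diff (ωh := ωh) hd hs hb₁.1 hb₂.1
    calc |w₁ - w₂| ≤ d * (s - rh) := h1
      _ ≤ d * ε := mul_le_mul_of_nonneg_left (by linarith [hs.2]) hd0
  have hsum1 : |(w₂ ^ 2 - 1) + (w₁ ^ 2 - 1)| ≤ 2 * (Bom Λ rh ωh ^ 2 + 1) := by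
    have := sq_le_of_abs_le hw₁
    have := sq_le_of_abs_le hw₂
    have h1 : |w₂ ^ 2 - 1| ≤ Bom Λ rh ωh ^ 2 + 1 := by
      refine le_trans (abs_sub _ _) ?_
      rw [abs_of_nonneg (sq_nonneg _), abs_one]
      linarith
    have h2 : |w₁ ^ 2 - 1| ≤ Bom Λ rh ωh ^ 2 + 1 := by
      refine le_trans (abs_sub _ _) ?_
      rw [abs_of_nonneg (sq_nonneg _), abs_one]
      linarith
    refine le_trans (abs_add_le _ _) (by linarith)
  have hsum2 : |w₂ + w₁| ≤ 2 * Bom Λ rh ωh :=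
    le_trans (abs_add_le _ _) (by linarith)
  have hnum := amul hsum1 (amul hsum2 hΔ)
  rw [heq, abs_div, abs_of_pos (by positivity : (0:ℝ) < rho rh s ^ 2 * rho rh s)]
  have hden : rh ^ 2 * rh ≤ rho rh s ^ 2 * rho rh s := by
    have h3 : rh ^ 3 ≤ rho rh s ^ 3 := pow_le_pow_left₀ hrh.le hρ2 3
    nlinarith [h3]
  have hBom := Bom_pos (Λ := Λ) (rh := rh) (ωh := ωh)
  have hεnn := he.1.le
  have hb0 : (0:ℝ) ≤ 2 * (Bom Λ rh ωh ^ 2 + 1) * (2 * Bom Λ rh ωh * (d * ε)) :=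
    mul_nonneg (by nlinarith) (mul_nonneg (by nlinarith) (mul_nonneg hd0 hεnn))
  refine le_trans (div_le_div₀ hb0 hnum (by positivity) hden) ?_
  rw [show 2 * (Bom Λ rh ωh ^ 2 + 1) * (2 * Bom Λ rh ωh * (d * ε)) / (rh ^ 2 * rh)
    = (4 * (Bom Λ rh ωh ^ 2 + 1) * Bom Λ rh ωh / rh ^ 3) * (d * ε) by
      field_simp
      ring]
  rfl

lemma Qint_diff (hrh : 0 < rh) (hK : 0 < KK Λ rh ωh) (he : Eok Λ rh ωh ε)
    (hb₁ : Ball Λ rh ωh u₁) (hb₂ : Ball Λ rh ωh u₂)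
    (hd0 : 0 ≤ d) (hd : ∀ s ∈ Set.Icc rh (rh + ε), |u₁ s - u₂ s| ≤ d)
    {s : ℝ} (hs : s ∈ Set.Icc rh (rh + ε)) :
    |exp (Pf rh u₁ s) * qf Λ (rho rh s) (Om rh ωh u₁ s)
      - exp (Pf rh u₂ s) * qf Λ (rho rh s) (Om rh ωh u₂ s)|
      ≤ LQ' Λ rh ωh * (d * ε) := by
  set a₁ := exp (Pf rh u₁ s)
  set a₂ := exp (Pf rh u₂ s)
  set b₁ := qf Λ (rho rh s) (Om rh ωh u₁ s)
  set b₂ := qf Λ (rho rh s) (Om rh ωh u₂ s)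
  have heq : a₁ * b₁ - a₂ * b₂ = (a₁ - a₂) * b₂ + a₁ * (b₁ - b₂) := by ring
  have hband₂ := qf_band hrh he hb₂ hs
  have hb₂abs : |b₂| ≤ 2 * KK Λ rh ωh := by
    rw [abs_of_nonneg (by linarith [hband₂.1])]
    exact hband₂.2
  have ha₁ : |a₁| ≤ Ep Λ rh ωh := by
    rw [abs_of_nonneg (exp_nonneg _)]
    exact exp_le_exp.2 (Pf_le hrh hb₁.1 hb₁ he.2.1 hs)
  have h1 := amul (expP_diff hrh he hb₁ hb₂ hd0 hd hs) hb₂abs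
  have h2 := amul ha₁ (qf_diff hrh he hb₁ hb₂ hd0 hd hs)
  rw [heq]
  refine le_trans (abs_add_le _ _) ?_
  have : LQ' Λ rh ωh * (d * ε)
      = Ep Λ rh ωh * (Lp Λ rh ωh * d * ε) * (2 * KK Λ rh ωh)
        + Ep Λ rh ωh * (Lq Λ rh ωh * (d * ε)) := by
    unfold LQ'
    ring
  linarith [h1, h2]

lemma Qf_diff (hrh : 0 < rh) (hK : 0 < KK Λ rh ωh) (he : Eok Λ rh ωh ε)
    (hb₁ : Ball Λ rh ωh u₁) (hb₂ : Ball Λ rh ωh u₂)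
    (hd0 : 0 ≤ d) (hd : ∀ s ∈ Set.Icc rh (rh + ε), |u₁ s - u₂ s| ≤ d)
    {r : ℝ} (hr : r ∈ Set.Icc rh (rh + ε)) :
    |Qf Λ rh ωh u₁ r - Qf Λ rh ωh u₂ r| ≤ LQ' Λ rh ωh * (d * ε) * (r - rh) := by
  have heq : Qf Λ rh ωh u₁ r - Qf Λ rh ωh u₂ r
      = ∫ s in rh..r, (exp (Pf rh u₁ s) * qf Λ (rho rh s) (Om rh ωh u₁ s)
        - exp (Pf rh u₂ s) * qf Λ (rho rh s) (Om rh ωh u₂ s)) := by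
    unfold Qf
    rw [intervalIntegral.integral_sub
      ((continuous_Qint hrh hb₁.1).intervalIntegrable _ _)
      ((continuous_Qint hrh hb₂.1).intervalIntegrable _ _)]
  rw [heq]
  exact abs_integral_le hr.1
    (fun t ht => Qint_diff hrh hK he hb₁ hb₂ hd0 hd (mem_sub ht hr))

lemma Nf_diff (hrh : 0 < rh) (hK : 0 < KK Λ rh ωh) (he : Eok Λ rh ωh ε)
    (hb₁ : Ball Λ rh ωh u₁) (hb₂ : Ball Λ rh ωh u₂)
    (hd0 : 0 ≤ d) (hd : ∀ s ∈ Set.Icc rh (rh + ε), |u₁ s - u₂ s| ≤ d)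
    {r : ℝ} (hr : r ∈ Set.Icc rh (rh + ε)) :
    |Nf Λ rh ωh u₁ r - Nf Λ rh ωh u₂ r| ≤ LN Λ rh ωh * (d * ε) * (r - rh) := by
  set a₁ := exp (-Pf rh u₁ r)
  set a₂ := exp (-Pf rh u₂ r)
  have heq : Nf Λ rh ωh u₁ r - Nf Λ rh ωh u₂ r
      = (a₁ - a₂) * Qf Λ rh ωh u₂ r + a₁ * (Qf Λ rh ωh u₁ r - Qf Λ rh ωh u₂ r) := by
    unfold Nf
    ring
  have ha₁ : |a₁| ≤ 1 := by
    rw [abs_of_nonneg (exp_nonneg _), ← exp_zero]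
    exact exp_le_exp.2 (by linarith [Pf_nonneg hrh hb₁.1 hr.1])
  have h1 := amul (expNegP_diff hrh he hb₁ hb₂ hd0 hd hr) (Qf_upper hrh hK hb₂.1 he hb₂ hr)
  have h2 := amul ha₁ (Qf_diff hrh hK he hb₁ hb₂ hd0 hd hr)
  rw [heq]
  refine le_trans (abs_add_le _ _) ?_
  rw [one_mul] at h2
  have hBN : BN Λ rh ωh = Ep Λ rh ωh * (2 * KK Λ rh ωh) := rfl
  have : LN Λ rh ωh * (d * ε) * (r - rh)
      = Lp Λ rh ωh * d * ε * (BN Λ rh ωh * (r - rh))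
        + LQ' Λ rh ωh * (d * ε) * (r - rh) := by
    rw [hBN]
    unfold LN
    ring
  linarith [h1, h2]

lemma Gf_diff (hrh : 0 < rh) (hK : 0 < KK Λ rh ωh) (he : Eok Λ rh ωh ε)
    (hb₁ : Ball Λ rh ωh u₁) (hb₂ : Ball Λ rh ωh u₂)
    (hd0 : 0 ≤ d) (hd : ∀ s ∈ Set.Icc rh (rh + ε), |u₁ s - u₂ s| ≤ d)
    {s : ℝ} (hs : s ∈ Set.Icc rh (rh + ε)) :
    |Gf Λ rh ωh u₁ s - Gf Λ rh ωh u₂ s| ≤ CG Λ rh ωh * d * (s - rh) := by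
  have hρ : rho rh s = s := rho_eq hs.1
  have hBv := Bv_pos (Λ := Λ) (rh := rh) (ωh := ωh)
  have hBom := Bom_pos (Λ := Λ) (rh := rh) (ωh := ωh)
  set N₁ := Nf Λ rh ωh u₁ s
  set N₂ := Nf Λ rh ωh u₂ s
  set W₁ := Om rh ωh u₁ s
  set W₂ := Om rh ωh u₂ s
  have heq : Gf Λ rh ωh u₁ s - Gf Λ rh ωh u₂ s
      = 2 * rho rh s * (N₁ * (u₁ s * (1 - u₁ s ^ 2) - u₂ s * (1 - u₂ s ^ 2))
          + (N₁ - N₂) * (u₂ s * (1 - u₂ s ^ 2)))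
        + ((W₁ ^ 2 - 1) * W₁ - (W₂ ^ 2 - 1) * W₂) := by
    unfold Gf
    ring
  have h2ρ : |2 * rho rh s| ≤ 2 * (rh + 1) := by
    rw [hρ, abs_of_nonneg (by linarith [hs.1] : (0:ℝ) ≤ 2 * s)]
    linarith [hs.2, he.2.1]
  -- ν difference
  have hν : |u₁ s * (1 - u₁ s ^ 2) - u₂ s * (1 - u₂ s ^ 2)| ≤ Lnu Λ rh ωh * d := by
    have hv₁ := ball_abs_le hb₁ s
    have hv₂ := ball_abs_le hb₂ s
    have hΔ := hd s hs
    have heq2 : u₁ s * (1 - u₁ s ^ 2) - u₂ s * (1 - u₂ s ^ 2)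
        = (u₁ s - u₂ s) * (1 - (u₁ s ^ 2 + u₁ s * u₂ s + u₂ s ^ 2)) := by ring
    rw [heq2, Lnu]
    have hq : |1 - (u₁ s ^ 2 + u₁ s * u₂ s + u₂ s ^ 2)| ≤ 1 + 3 * Bv Λ rh ωh ^ 2 := by
      refine le_trans (abs_sub _ _) ?_
      rw [abs_one]
      have h1 : |u₁ s ^ 2 + u₁ s * u₂ s + u₂ s ^ 2| ≤ 3 * Bv Λ rh ωh ^ 2 := by
        refine le_trans (abs_add_le _ _) ?_
        refine le_trans (add_le_add (abs_add_le _ _) (le_refl _)) ?_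
        have e1 : |u₁ s ^ 2| ≤ Bv Λ rh ωh ^ 2 := by
          rw [abs_of_nonneg (sq_nonneg _)]
          exact sq_le_of_abs_le hv₁
        have e2 : |u₂ s ^ 2| ≤ Bv Λ rh ωh ^ 2 := by
          rw [abs_of_nonneg (sq_nonneg _)]
          exact sq_le_of_abs_le hv₂
        have e3 : |u₁ s * u₂ s| ≤ Bv Λ rh ωh ^ 2 := by
          have := amul hv₁ hv₂
          calc |u₁ s * u₂ s| ≤ Bv Λ rh ωh * Bv Λ rh ωh := this
            _ = Bv Λ rh ωh ^ 2 := by ring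
        linarith
      linarith
    have := amul hΔ hq
    calc |(u₁ s - u₂ s) * (1 - (u₁ s ^ 2 + u₁ s * u₂ s + u₂ s ^ 2))|
        ≤ d * (1 + 3 * Bv Λ rh ωh ^ 2) := this
      _ = (1 + 3 * Bv Λ rh ωh ^ 2) * d := by ring
  -- pieces
  have hN₁ : |N₁| ≤ BN Λ rh ωh * (s - rh) := Nf_upper hrh hK hb₁.1 he hb₁ hs
  have hΔN : |N₁ - N₂| ≤ LN Λ rh ωh * (d * ε) * (s - rh) :=
    Nf_diff hrh hK he hb₁ hb₂ hd0 hd hs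
  have hν₂ : |u₂ s * (1 - u₂ s ^ 2)| ≤ Bv Λ rh ωh * (1 + Bv Λ rh ωh ^ 2) := by
    refine amul (ball_abs_le hb₂ s) ?_
    refine le_trans (abs_sub _ _) ?_
    rw [abs_one, abs_of_nonneg (sq_nonneg _)]
    linarith [sq_le_of_abs_le (ball_abs_le hb₂ s)]
  have hcube : |(W₁ ^ 2 - 1) * W₁ - (W₂ ^ 2 - 1) * W₂| ≤ Lcube Λ rh ωh * (d * (s - rh)) := by
    have hw₁ := Om_abs hb₁ he.2.1 hs
    have hw₂ := Om_abs hb₂ he.2.1 hs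
    have hΔW : |W₁ - W₂| ≤ d * (s - rh) := Om_diff (ωh := ωh) hd hs hb₁.1 hb₂.1
    have heq3 : (W₁ ^ 2 - 1) * W₁ - (W₂ ^ 2 - 1) * W₂
        = (W₁ - W₂) * ((W₁ ^ 2 + W₁ * W₂ + W₂ ^ 2) - 1) := by ring
    rw [heq3, Lcube]
    have hq : |(W₁ ^ 2 + W₁ * W₂ + W₂ ^ 2) - 1| ≤ 3 * Bom Λ rh ωh ^ 2 + 1 := by
      refine le_trans (abs_sub _ _) ?_
      rw [abs_one]
      have h1 : |W₁ ^ 2 + W₁ * W₂ + W₂ ^ 2| ≤ 3 * Bom Λ rh ωh ^ 2 := by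
        refine le_trans (abs_add_le _ _) ?_
        refine le_trans (add_le_add (abs_add_le _ _) (le_refl _)) ?_
        have e1 : |W₁ ^ 2| ≤ Bom Λ rh ωh ^ 2 := by
          rw [abs_of_nonneg (sq_nonneg _)]
          exact sq_le_of_abs_le hw₁
        have e2 : |W₂ ^ 2| ≤ Bom Λ rh ωh ^ 2 := by
          rw [abs_of_nonneg (sq_nonneg _)]
          exact sq_le_of_abs_le hw₂
        have e3 : |W₁ * W₂| ≤ Bom Λ rh ωh ^ 2 := by
          have := amul hw₁ hw₂
          calc |W₁ * W₂| ≤ Bom Λ rh ωh * Bom Λ rh ωh := this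
            _ = Bom Λ rh ωh ^ 2 := by ring
        linarith
      linarith
    have := amul hΔW hq
    calc |(W₁ - W₂) * ((W₁ ^ 2 + W₁ * W₂ + W₂ ^ 2) - 1)|
        ≤ d * (s - rh) * (3 * Bom Λ rh ωh ^ 2 + 1) := this
      _ = (3 * Bom Λ rh ωh ^ 2 + 1) * (d * (s - rh)) := by ring
  -- combine
  have hsrh : 0 ≤ s - rh := by linarith [hs.1]
  have hin : |N₁ * (u₁ s * (1 - u₁ s ^ 2) - u₂ s * (1 - u₂ s ^ 2))
      + (N₁ - N₂) * (u₂ s * (1 - u₂ s ^ 2))|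
      ≤ (BN Λ rh ωh * Lnu Λ rh ωh + LN Λ rh ωh * (Bv Λ rh ωh * (1 + Bv Λ rh ωh ^ 2)))
        * d * (s - rh) := by
    refine le_trans (abs_add_le _ _) ?_
    have t1 := amul hN₁ hν
    have t2 := amul hΔN hν₂
    have hε1 := he.2.1
    have hLNn := LN_nonneg (Λ := Λ) (ωh := ωh) hrh hK
    have hX : (0:ℝ) ≤ Bv Λ rh ωh * (1 + Bv Λ rh ωh ^ 2) := by positivity
    have k := mul_nonneg (mul_nonneg (mul_nonneg (mul_nonneg hLNn hd0) hsrh) hX)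
      (by linarith : (0:ℝ) ≤ 1 - ε)
    nlinarith [t1, t2, k]
  rw [heq]
  refine le_trans (abs_add_le _ _) ?_
  have hmain := amul h2ρ hin
  rw [CG]
  nlinarith [hmain, hcube]

lemma BG_nonneg (hrh : 0 < rh) (hK : 0 < KK Λ rh ωh) : 0 ≤ BG Λ rh ωh := by
  have h1 := BN_nonneg (Λ := Λ) (rh := rh) (ωh := ωh) hK
  have h2 := Bv_pos (Λ := Λ) (rh := rh) (ωh := ωh)
  have h3 := Bom_pos (Λ := Λ) (rh := rh) (ωh := ωh)
  unfold BG
  positivity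

lemma CG_nonneg (hrh : 0 < rh) (hK : 0 < KK Λ rh ωh) : 0 ≤ CG Λ rh ωh := by
  have h1 := BN_nonneg (Λ := Λ) (rh := rh) (ωh := ωh) hK
  have h2 := Bv_pos (Λ := Λ) (rh := rh) (ωh := ωh)
  have h3 := Bom_pos (Λ := Λ) (rh := rh) (ωh := ωh)
  have h4 := LN_nonneg (Λ := Λ) (ωh := ωh) hrh hK
  unfold CG Lnu Lcube
  positivity

lemma Ctot_nonneg (hrh : 0 < rh) (hK : 0 < KK Λ rh ωh) : 0 ≤ Ctot Λ rh ωh := by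
  have h1 := BG_nonneg (Λ := Λ) (rh := rh) (ωh := ωh) hrh hK
  have h2 := CG_nonneg (Λ := Λ) (rh := rh) (ωh := ωh) hrh hK
  have h4 := LN_nonneg (Λ := Λ) (ωh := ωh) hrh hK
  have h5 := cZ_pos (Λ := Λ) (ωh := ωh) hrh hK
  unfold Ctot
  positivity

lemma Tf_diff (hrh : 0 < rh) (hK : 0 < KK Λ rh ωh) (he : Eok Λ rh ωh ε)
    (hb₁ : Ball Λ rh ωh u₁) (hb₂ : Ball Λ rh ωh u₂)
    (hd0 : 0 ≤ d) (hd : ∀ s ∈ Set.Icc rh (rh + ε), |u₁ s - u₂ s| ≤ d)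
    {r : ℝ} (hr : r ∈ Set.Icc rh (rh + ε)) :
    |Tf Λ rh ωh u₁ r - Tf Λ rh ωh u₂ r| ≤ Ctot Λ rh ωh * ε * d := by
  have hCtot := Ctot_nonneg (Λ := Λ) (rh := rh) (ωh := ωh) hrh hK
  have hεnn := he.1.le
  by_cases hle : r ≤ rh
  · unfold Tf
    rw [if_pos hle, if_pos hle]
    simp only [sub_self, abs_zero]
    positivity
  · push_neg at hle
    unfold Tf
    rw [if_neg (not_le.2 hle), if_neg (not_le.2 hle)]
    set I₁ := ∫ s in rh..r, Gf Λ rh ωh u₁ s with hI₁def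
    set I₂ := ∫ s in rh..r, Gf Λ rh ωh u₂ s with hI₂def
    set Z₁ := Zf Λ rh ωh u₁ r
    set Z₂ := Zf Λ rh ωh u₂ r
    have hx : 0 < r - rh := by linarith
    have hcZ := cZ_pos (Λ := Λ) (ωh := ωh) hrh hK
    have hZ₁ : cZ Λ rh ωh * (r - rh) ≤ Z₁ := Zf_lower hrh hK hb₁.1 he hb₁ hr
    have hZ₂ : cZ Λ rh ωh * (r - rh) ≤ Z₂ := Zf_lower hrh hK hb₂.1 he hb₂ hr
    have hZ₁p : 0 < Z₁ := lt_of_lt_of_le (by positivity) hZ₁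
    have hZ₂p : 0 < Z₂ := lt_of_lt_of_le (by positivity) hZ₂
    have heq : I₁ / Z₁ - I₂ / Z₂ = (I₁ - I₂) / Z₁ + I₂ * (Z₂ - Z₁) / (Z₁ * Z₂) := by
      field_simp
      ring
    have hΔI : |I₁ - I₂| ≤ CG Λ rh ωh * d * (r - rh) * (r - rh) := by
      have : I₁ - I₂ = ∫ s in rh..r, (Gf Λ rh ωh u₁ s - Gf Λ rh ωh u₂ s) := by
        rw [hI₁def, hI₂def,
          intervalIntegral.integral_sub
            ((continuous_Gf hrh hb₁.1).intervalIntegrable _ _)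
            ((continuous_Gf hrh hb₂.1).intervalIntegrable _ _)]
      rw [this]
      refine abs_integral_le hr.1 (fun t ht => ?_)
      refine le_trans (Gf_diff hrh hK he hb₁ hb₂ hd0 hd (mem_sub ht hr)) ?_
      have hCG := CG_nonneg (Λ := Λ) (rh := rh) (ωh := ωh) hrh hK
      have := ht.2
      nlinarith [mul_nonneg hCG hd0]
    have hI₂b : |I₂| ≤ BG Λ rh ωh * (r - rh) :=
      abs_integral_le hr.1 (fun t ht => Gf_abs hrh hK hb₂.1 he hb₂ (mem_sub ht hr))
    have hΔZ : |Z₁ - Z₂| ≤ (rh + 1) ^ 2 * (LN Λ rh ωh * (d * ε) * (r - rh)) := by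
      have : Z₁ - Z₂ = r ^ 2 * (Nf Λ rh ωh u₁ r - Nf Λ rh ωh u₂ r) := by
        unfold Z₁ Z₂
        unfold Zf
        ring
      rw [this]
      refine amul ?_ (Nf_diff hrh hK he hb₁ hb₂ hd0 hd hr)
      rw [abs_of_nonneg (sq_nonneg r)]
      nlinarith [hr.1, hr.2, he.2.1]
    -- first term
    have hfirst : |(I₁ - I₂) / Z₁| ≤ CG Λ rh ωh / cZ Λ rh ωh * (d * ε) := by
      rw [abs_div, abs_of_pos hZ₁p]
      have h1 : |I₁ - I₂| / Z₁ ≤ (CG Λ rh ωh * d * (r - rh) * (r - rh)) / (cZ Λ rh ωh * (r - rh)) := by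
        refine div_le_div₀ ?_ hΔI (by positivity) hZ₁
        have hCG := CG_nonneg (Λ := Λ) (rh := rh) (ωh := ωh) hrh hK
        positivity
      refine le_trans h1 ?_
      rw [show CG Λ rh ωh * d * (r - rh) * (r - rh) / (cZ Λ rh ωh * (r - rh))
        = CG Λ rh ωh / cZ Λ rh ωh * (d * (r - rh)) by field_simp]
      have hCG := CG_nonneg (Λ := Λ) (rh := rh) (ωh := ωh) hrh hK
      have : d * (r - rh) ≤ d * ε := mul_le_mul_of_nonneg_left (by linarith [hr.2]) hd0
      have hq : 0 ≤ CG Λ rh ωh / cZ Λ rh ωh := by positivity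
      nlinarith [mul_le_mul_of_nonneg_left this hq]
    -- second term
    have hsecond : |I₂ * (Z₂ - Z₁) / (Z₁ * Z₂)|
        ≤ BG Λ rh ωh * (rh + 1) ^ 2 * LN Λ rh ωh / cZ Λ rh ωh ^ 2 * (ε * d) := by
      rw [abs_div, abs_of_pos (by positivity : (0:ℝ) < Z₁ * Z₂)]
      have hBG := BG_nonneg (Λ := Λ) (rh := rh) (ωh := ωh) hrh hK
      have hLN := LN_nonneg (Λ := Λ) (ωh := ωh) hrh hK
      have hnum : |I₂ * (Z₂ - Z₁)|
          ≤ BG Λ rh ωh * (r - rh) * ((rh + 1) ^ 2 * (LN Λ rh ωh * (d * ε) * (r - rh))) := by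
        refine amul hI₂b ?_
        rw [abs_sub_comm]
        exact hΔZ
      have hden : cZ Λ rh ωh * (r - rh) * (cZ Λ rh ωh * (r - rh)) ≤ Z₁ * Z₂ := by
        have h0 : 0 ≤ cZ Λ rh ωh * (r - rh) := by positivity
        nlinarith [hZ₁, hZ₂]
      have h1 : |I₂ * (Z₂ - Z₁)| / (Z₁ * Z₂)
          ≤ (BG Λ rh ωh * (r - rh) * ((rh + 1) ^ 2 * (LN Λ rh ωh * (d * ε) * (r - rh))))
            / (cZ Λ rh ωh * (r - rh) * (cZ Λ rh ωh * (r - rh))) := by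
        refine div_le_div₀ ?_ hnum (by positivity) hden
        positivity
      refine le_trans h1 (le_of_eq ?_)
      field_simp
    rw [heq]
    refine le_trans (abs_add_le _ _) ?_
    refine le_trans (add_le_add hfirst hsecond) (le_of_eq ?_)
    unfold Ctot
    ring

end Contraction

/-! ### The map T : properties -/

section TMap
variable {Λ rh ωh ε : ℝ} {u : ℝ → ℝ}

lemma Hf_rh (hrh : 0 < rh) (hK : 0 < KK Λ rh ωh) (hvh : u rh = vh Λ rh ωh) :
    Hf Λ rh ωh u rh = 0 := by
  unfold Hf Gf Z'f
  rw [Nf_rh, Om_rh, rho_rh]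
  rw [qf_rh_eq]
  have := vh_Zeq (Λ := Λ) (ωh := ωh) hrh hK
  ring_nf
  ring_nf at this
  linarith

@[simp] lemma Tf_rh : Tf Λ rh ωh u rh = vh Λ rh ωh := by
  unfold Tf
  rw [if_pos (le_refl rh)]

lemma Tf_sub_vh (hrh : 0 < rh) (hK : 0 < KK Λ rh ωh) (he : Eok Λ rh ωh ε)
    (hb : Ball Λ rh ωh u) {r : ℝ} (hr : r ∈ Set.Icc rh (rh + ε)) {η : ℝ} (hη : 0 ≤ η)
    (hH : ∀ s ∈ Set.Icc rh r, |Hf Λ rh ωh u s| ≤ η) :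
    |Tf Λ rh ωh u r - vh Λ rh ωh| ≤ η / cZ Λ rh ωh := by
  have hcZ := cZ_pos (Λ := Λ) (ωh := ωh) hrh hK
  by_cases hle : r ≤ rh
  · unfold Tf
    rw [if_pos hle]
    simp only [sub_self, abs_zero]
    positivity
  · push_neg at hle
    have hx : 0 < r - rh := by linarith
    have hZ : cZ Λ rh ωh * (r - rh) ≤ Zf Λ rh ωh u r := Zf_lower hrh hK hb.1 he hb hr
    have hZp : 0 < Zf Λ rh ωh u r := lt_of_lt_of_le (by positivity) hZ
    have hint : ∫ s in rh..r, Hf Λ rh ωh u s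
        = (∫ s in rh..r, Gf Λ rh ωh u s) - vh Λ rh ωh * Zf Λ rh ωh u r := by
      unfold Hf
      rw [intervalIntegral.integral_sub
        ((continuous_Gf hrh hb.1).intervalIntegrable _ _)
        ((by exact (continuous_const.mul (continuous_Z'f hrh hb.1)).intervalIntegrable _ _ :
          IntervalIntegrable (fun s => vh Λ rh ωh * Z'f Λ rh ωh u s) MeasureTheory.volume rh r)),
        intervalIntegral.integral_const_mul, ← Zf_eq_integral hrh hb.1]
    have heq : Tf Λ rh ωh u r - vh Λ rh ωh
        = (∫ s in rh..r, Hf Λ rh ωh u s) / Zf Λ rh ωh u r := by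
      unfold Tf
      rw [if_neg (not_le.2 hle), hint]
      field_simp
    rw [heq, abs_div, abs_of_pos hZp]
    have hnum : |∫ s in rh..r, Hf Λ rh ωh u s| ≤ η * (r - rh) :=
      abs_integral_le hr.1 hH
    calc |∫ s in rh..r, Hf Λ rh ωh u s| / Zf Λ rh ωh u r
        ≤ η * (r - rh) / (cZ Λ rh ωh * (r - rh)) :=
          div_le_div₀ (by positivity) hnum (by positivity) hZ
      _ = η / cZ Λ rh ωh := by
          field_simp

lemma ball_const : Ball Λ rh ωh (fun _ => vh Λ rh ωh) :=
  ⟨continuous_const, rfl, fun _ => by simp⟩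

/-- self-map bound -/
lemma Tf_ball (hrh : 0 < rh) (hK : 0 < KK Λ rh ωh) (he : Eok Λ rh ωh ε)
    (hb : Ball Λ rh ωh u) {r : ℝ} (hr : r ∈ Set.Icc rh (rh + ε)) :
    |Tf Λ rh ωh u r - vh Λ rh ωh| ≤ 1 := by
  have hcZ := cZ_pos (Λ := Λ) (ωh := ωh) hrh hK
  have h1 : |Tf Λ rh ωh u r - Tf Λ rh ωh (fun _ => vh Λ rh ωh) r| ≤ Ctot Λ rh ωh * ε * 1 :=
    Tf_diff hrh hK he hb ball_const zero_le_one (fun s _ => hb.2.2 s) hr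
  have h2 : |Tf Λ rh ωh (fun _ => vh Λ rh ωh) r - vh Λ rh ωh| ≤ (cZ Λ rh ωh / 2) / cZ Λ rh ωh := by
    refine Tf_sub_vh hrh hK he ball_const hr (by positivity) ?_
    intro s hs
    exact he.2.2.2.2 s (mem_sub hs hr)
  have h3 : (cZ Λ rh ωh / 2) / cZ Λ rh ωh = 1 / 2 := by
    field_simp
  have h4 := he.2.2.2.1
  calc |Tf Λ rh ωh u r - vh Λ rh ωh|
      ≤ |Tf Λ rh ωh u r - Tf Λ rh ωh (fun _ => vh Λ rh ωh) r|
        + |Tf Λ rh ωh (fun _ => vh Λ rh ωh) r - vh Λ rh ωh| := by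
        have := abs_sub_abs_le_abs_sub (Tf Λ rh ωh u r - vh Λ rh ωh)
          (Tf Λ rh ωh u r - Tf Λ rh ωh (fun _ => vh Λ rh ωh) r)
        calc |Tf Λ rh ωh u r - vh Λ rh ωh| = |(Tf Λ rh ωh u r - Tf Λ rh ωh (fun _ => vh Λ rh ωh) r)
            + (Tf Λ rh ωh (fun _ => vh Λ rh ωh) r - vh Λ rh ωh)| := by ring_nf
          _ ≤ _ := abs_add_le _ _
    _ ≤ Ctot Λ rh ωh * ε * 1 + (cZ Λ rh ωh / 2) / cZ Λ rh ωh := add_le_add h1 h2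
    _ ≤ 1 := by rw [h3]; linarith [h4]

/-- continuity of T u on the interval -/
lemma Tf_contOn (hrh : 0 < rh) (hK : 0 < KK Λ rh ωh) (he : Eok Λ rh ωh ε)
    (hb : Ball Λ rh ωh u) :
    ContinuousOn (Tf Λ rh ωh u) (Set.Icc rh (rh + ε)) := by
  intro t ht
  rcases eq_or_lt_of_le ht.1 with heq | hlt
  · -- continuity at rh
    rcases heq with rfl
    rw [Metric.continuousWithinAt_iff]
    intro e he'
    have hcZ := cZ_pos (Λ := Λ) (ωh := ωh) hrh hK
    have hHc : ContinuousAt (Hf Λ rh ωh u) rh := (continuous_Hf hrh hb.1).continuousAt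
    have h0 : Hf Λ rh ωh u rh = 0 := Hf_rh hrh hK hb.2.1
    rw [Metric.continuousAt_iff] at hHc
    obtain ⟨δ, hδ0, hδ⟩ := hHc (cZ Λ rh ωh * e / 2) (by positivity)
    refine ⟨δ, hδ0, fun {r} hr hdist => ?_⟩
    rw [Real.dist_eq, Tf_rh]
    have hH : ∀ s ∈ Set.Icc rh r, |Hf Λ rh ωh u s| ≤ cZ Λ rh ωh * e / 2 := by
      intro s hs
      have : dist s rh < δ := by
        rw [Real.dist_eq, abs_of_nonneg (by linarith [hs.1])]
        rw [Real.dist_eq] at hdist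
        have := le_abs_self (r - rh)
        linarith [hs.2]
      have := le_of_lt (hδ this)
      rw [Real.dist_eq, h0, sub_zero] at this
      exact this
    have := Tf_sub_vh hrh hK he hb hr (by positivity) hH
    calc |Tf Λ rh ωh u r - vh Λ rh ωh| ≤ (cZ Λ rh ωh * e / 2) / cZ Λ rh ωh := this
      _ = e / 2 := by field_simp
      _ < e := by linarith
  · -- continuity at interior-ish points
    have hQ : ContinuousAt (fun r => (∫ s in rh..r, Gf Λ rh ωh u s) / Zf Λ rh ωh u r) t := by
      refine ContinuousAt.div
        ((continuous_primitive (continuous_Gf hrh hb.1) rh).continuousAt)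
        ((continuous_Zf hrh hb.1).continuousAt) ?_
      exact (Zf_pos hrh hK hb.1 he hb ht hlt).ne'
    have heq : Tf Λ rh ωh u =ᶠ[nhds t]
        (fun r => (∫ s in rh..r, Gf Λ rh ωh u s) / Zf Λ rh ωh u r) := by
      filter_upwards [IsOpen.mem_nhds isOpen_Ioi hlt] with x hx
      unfold Tf
      rw [if_neg (not_le.2 hx)]
    exact (hQ.congr heq.symm).continuousWithinAt

end TMap

/-! ### Fixed point existence -/

section FP
variable {Λ rh ωh ε : ℝ}

lemma exists_fixed_point (hrh : 0 < rh) (hK : 0 < KK Λ rh ωh) (he : Eok Λ rh ωh ε) :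
    ∃ v : ℝ → ℝ, Ball Λ rh ωh v ∧
      ∀ r ∈ Set.Icc rh (rh + ε), v r = Tf Λ rh ωh v r := by
  have hle : rh ≤ rh + ε := by linarith [he.1]
  set ι := Set.Icc rh (rh + ε) with hι
  have hrhι : rh ∈ ι := ⟨le_refl rh, hle⟩
  -- the closed subset of C(ι, ℝ)
  set S : Set C(↥ι, ℝ) :=
    {f | f ⟨rh, hrhι⟩ = vh Λ rh ωh ∧ ∀ t, dist (f t) (vh Λ rh ωh) ≤ 1} with hS
  have hSclosed : IsClosed S := by
    rw [hS, Set.setOf_and]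
    refine IsClosed.inter ?_ ?_
    · exact isClosed_eq (continuous_eval_const _) continuous_const
    · rw [Set.setOf_forall]
      exact isClosed_iInter (fun t =>
        isClosed_le ((continuous_eval_const t).dist continuous_const)
          continuous_const)
  have hext : ∀ f : C(↥ι, ℝ), f ∈ S → Ball Λ rh ωh (Set.IccExtend hle f) := by
    intro f hf
    refine ⟨(map_continuous f).Icc_extend', ?_, ?_⟩
    · rw [Set.IccExtend_of_mem hle f hrhι]
      exact hf.1
    · intro s
      have : Set.IccExtend hle f s = f (Set.projIcc rh (rh + ε) hle s) := rfl
      rw [this]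
      have := hf.2 (Set.projIcc rh (rh + ε) hle s)
      rwa [Real.dist_eq] at this
  -- the map
  have hmap : ∀ f : ↥S, ∀ t : ↥ι, True := fun _ _ => trivial
  set TT : ↥S → ↥S := fun f =>
    ⟨⟨ι.restrict (Tf Λ rh ωh (Set.IccExtend hle f.1)),
      ContinuousOn.restrict (Tf_contOn hrh hK he (hext f.1 f.2))⟩, by
        constructor
        · show Tf Λ rh ωh _ rh = vh Λ rh ωh
          exact Tf_rh
        · intro t
          show dist (Tf Λ rh ωh _ t.1) (vh Λ rh ωh) ≤ 1
          rw [Real.dist_eq]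
          exact Tf_ball hrh hK he (hext f.1 f.2) t.2⟩ with hTT
  have : Nonempty ↥S := ⟨⟨ContinuousMap.const _ (vh Λ rh ωh), rfl, fun t => by simp⟩⟩
  have : CompleteSpace ↥S := hSclosed.completeSpace_coe
  have hcontr : ContractingWith (1/2 : NNReal) TT := by
    constructor
    · rw [← NNReal.coe_lt_coe]
      norm_num
    · refine LipschitzWith.of_dist_le_mul (fun f g => ?_)
      rw [Subtype.dist_eq, Subtype.dist_eq]
      have hd : 0 ≤ dist f.1 g.1 := dist_nonneg
      have key : dist (TT f).1 (TT g).1 ≤ (1/2 : ℝ) * dist f.1 g.1 := by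
        rw [ContinuousMap.dist_le (by positivity)]
        intro t
        have hdd : ∀ s ∈ Set.Icc rh (rh + ε),
            |Set.IccExtend hle f.1 s - Set.IccExtend hle g.1 s| ≤ dist f.1 g.1 := by
          intro s hs
          rw [Set.IccExtend_of_mem hle _ hs, Set.IccExtend_of_mem hle _ hs]
          rw [← Real.dist_eq]
          exact ContinuousMap.dist_apply_le_dist _
        have := Tf_diff hrh hK he (hext f.1 f.2) (hext g.1 g.2) hd hdd t.2
        rw [Real.dist_eq]
        show |Tf Λ rh ωh (Set.IccExtend hle f.1) t.1
          - Tf Λ rh ωh (Set.IccExtend hle g.1) t.1| ≤ _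
        refine le_trans this ?_
        have h4 := he.2.2.2.1
        nlinarith [hd]
      refine le_trans key (le_of_eq ?_)
      norm_num
  -- extract the fixed point
  set F := ContractingWith.fixedPoint TT hcontr with hFdef
  have hfix : TT F = F := hcontr.fixedPoint_isFixedPt
  refine ⟨Set.IccExtend hle F.1, hext F.1 F.2, ?_⟩
  intro r hr
  have h1 : Set.IccExtend hle (F.1 : C(↥ι, ℝ)) r = F.1 ⟨r, hr⟩ :=
    Set.IccExtend_of_mem hle _ hr
  have h2 := congrArg (fun G : ↥S => (G.1 : C(↥ι, ℝ)) ⟨r, hr⟩) hfix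
  rw [h1, ← h2]
  rfl

lemma exists_eok (hrh : 0 < rh) (hK : 0 < KK Λ rh ωh) : ∃ ε, Eok Λ rh ωh ε := by
  have hBv := Bv_pos (Λ := Λ) (rh := rh) (ωh := ωh)
  have hcZ := cZ_pos (Λ := Λ) (ωh := ωh) hrh hK
  have hCtot := Ctot_nonneg (Λ := Λ) (rh := rh) (ωh := ωh) hrh hK
  -- continuity of qf at (rh, ωh)
  have hqcont : ContinuousAt (fun p : ℝ × ℝ => qf Λ p.1 p.2) (rh, ωh) := by
    unfold qf
    refine ContinuousAt.div ?_ continuousAt_fst hrh.ne'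
    refine ContinuousAt.sub (ContinuousAt.sub continuousAt_const ?_) ?_
    · exact (continuousAt_const.mul ((continuousAt_fst).pow 2))
    · exact ContinuousAt.div ((((continuousAt_snd).pow 2).sub continuousAt_const).pow 2)
        ((continuousAt_fst).pow 2) (pow_ne_zero 2 hrh.ne')
  rw [Metric.continuousAt_iff] at hqcont
  obtain ⟨δ₁, hδ₁0, hδ₁⟩ := hqcont (KK Λ rh ωh / 2) (by positivity)
  -- continuity of Hf (const) at rh
  have hHcont : ContinuousAt (Hf Λ rh ωh (fun _ => vh Λ rh ωh)) rh :=
    (continuous_Hf hrh continuous_const).continuousAt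
  rw [Metric.continuousAt_iff] at hHcont
  obtain ⟨δ₂, hδ₂0, hδ₂⟩ := hHcont (cZ Λ rh ωh / 2) (by positivity)
  -- choose ε
  set ε := min (min 1 (δ₁ / (2 * (1 + Bv Λ rh ωh))))
    (min (1 / (2 * (Ctot Λ rh ωh + 1))) (δ₂ / 2)) with hεdef
  have hε0 : 0 < ε := by
    refine lt_min (lt_min one_pos (by positivity)) (lt_min (by positivity) (by positivity))
  refine ⟨ε, hε0, le_trans (min_le_left _ _) (min_le_left _ _), ?_, ?_, ?_⟩
  · -- qf condition
    intro x w hx hw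
    have hεle : ε ≤ δ₁ / (2 * (1 + Bv Λ rh ωh)) :=
      le_trans (min_le_left _ _) (min_le_right _ _)
    have hd : dist (x, w) (rh, ωh) < δ₁ := by
      rw [Prod.dist_eq]
      have k1 : dist x rh < δ₁ := by
        rw [Real.dist_eq]
        have : (1 + Bv Λ rh ωh) * ε ≤ (1 + Bv Λ rh ωh) * (δ₁ / (2 * (1 + Bv Λ rh ωh))) :=
          mul_le_mul_of_nonneg_left hεle (by positivity)
        rw [show (1 + Bv Λ rh ωh) * (δ₁ / (2 * (1 + Bv Λ rh ωh))) = δ₁ / 2 by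
          field_simp] at this
        nlinarith [hx, mul_nonneg hBv.le hε0.le]
      have k2 : dist w ωh < δ₁ := by
        rw [Real.dist_eq]
        have : (1 + Bv Λ rh ωh) * ε ≤ (1 + Bv Λ rh ωh) * (δ₁ / (2 * (1 + Bv Λ rh ωh))) :=
          mul_le_mul_of_nonneg_left hεle (by positivity)
        rw [show (1 + Bv Λ rh ωh) * (δ₁ / (2 * (1 + Bv Λ rh ωh))) = δ₁ / 2 by
          field_simp] at this
        nlinarith [hw, hε0.le]
      exact max_lt k1 k2
    have := le_of_lt (hδ₁ hd)
    rwa [Real.dist_eq] at this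
  · -- contraction smallness
    have hεle : ε ≤ 1 / (2 * (Ctot Λ rh ωh + 1)) :=
      le_trans (min_le_right _ _) (min_le_left _ _)
    have h1 : Ctot Λ rh ωh * ε ≤ Ctot Λ rh ωh * (1 / (2 * (Ctot Λ rh ωh + 1))) :=
      mul_le_mul_of_nonneg_left hεle hCtot
    have h2 : Ctot Λ rh ωh * (1 / (2 * (Ctot Λ rh ωh + 1))) ≤ 1 / 2 := by
      rw [mul_one_div, div_le_div_iff₀ (by positivity) (by norm_num : (0:ℝ) < 2)]
      nlinarith
    linarith
  · -- Hf smallness at center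
    intro s hs
    have hεle : ε ≤ δ₂ / 2 := le_trans (min_le_right _ _) (min_le_right _ _)
    have hd : dist s rh < δ₂ := by
      rw [Real.dist_eq, abs_of_nonneg (by linarith [hs.1])]
      linarith [hs.2]
    have := le_of_lt (hδ₂ hd)
    rw [Real.dist_eq, Hf_rh hrh hK rfl, sub_zero] at this
    exact this

end FP

section Assembly
variable {Λ rh ωh ε : ℝ}

lemma contDiffOn_one_of_deriv {f g : ℝ → ℝ} {s : Set ℝ} (hs : IsOpen s)
    (hdiff : ∀ x ∈ s, HasDerivAt f (g x) x) (hg : ContinuousOn g s) :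
    ContDiffOn ℝ 1 f s := by
  rw [show (1 : WithTop ℕ∞) = 0 + 1 by norm_num, contDiffOn_succ_iff_deriv_of_isOpen hs]
  refine ⟨fun x hx => ((hdiff x hx).differentiableAt).differentiableWithinAt, ?_, ?_⟩
  · intro h; simp at h
  · rw [contDiffOn_zero]
    exact ContinuousOn.congr hg (fun x hx => (hdiff x hx).deriv)

lemma contDiffOn_two_of_deriv {f g : ℝ → ℝ} {s : Set ℝ} (hs : IsOpen s)
    (hdiff : ∀ x ∈ s, HasDerivAt f (g x) x) (hg : ContDiffOn ℝ 1 g s) :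
    ContDiffOn ℝ 2 f s := by
  rw [show (2 : WithTop ℕ∞) = 1 + 1 by norm_num, contDiffOn_succ_iff_deriv_of_isOpen hs]
  refine ⟨fun x hx => ((hdiff x hx).differentiableAt).differentiableWithinAt, ?_, ?_⟩
  · intro h; simp at h
  · exact ContDiffOn.congr hg (fun x hx => (hdiff x hx).deriv)

end Assembly

end EYM

open EYM in
/-- Local existence at the event horizon (Lemma 1). -/
theorem local_existence_at_horizon (Λ rh ωh : ℝ) (hΛ : Λ < 0) (hrh : 0 < rh)
    (hreg : (ωh ^ 2 - 1) ^ 2 < rh ^ 2 * (1 - Λ * rh ^ 2)) :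
    ∃ ε > 0, ∃ m ω S : ℝ → ℝ,
      ContinuousOn m (Ico rh (rh + ε)) ∧
      ContinuousOn ω (Ico rh (rh + ε)) ∧
      ContinuousOn S (Ico rh (rh + ε)) ∧
      ContDiffOn ℝ 2 m (Ioo rh (rh + ε)) ∧
      ContDiffOn ℝ 2 ω (Ioo rh (rh + ε)) ∧
      ContDiffOn ℝ 2 S (Ioo rh (rh + ε)) ∧
      (∀ r ∈ Ioo rh (rh + ε),
        deriv m r = (1 - 2 * m r / r - Λ * r ^ 2 / 3) * (deriv ω r) ^ 2
          + (ω r ^ 2 - 1) ^ 2 / (2 * r ^ 2)) ∧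
      (∀ r ∈ Ioo rh (rh + ε),
        deriv S r = 2 * S r * (deriv ω r) ^ 2 / r) ∧
      (∀ r ∈ Ioo rh (rh + ε),
        r ^ 2 * (1 - 2 * m r / r - Λ * r ^ 2 / 3) * deriv (deriv ω) r
          + (2 * m r - 2 * Λ * r ^ 3 / 3 - (ω r ^ 2 - 1) ^ 2 / r) * deriv ω r
          + (1 - ω r ^ 2) * ω r = 0) ∧
      m rh = rh / 2 - Λ * rh ^ 3 / 6 ∧
      ω rh = ωh ∧
      S rh = 1 ∧
      (∀ r ∈ Ioo rh (rh + ε), 0 < 1 - 2 * m r / r - Λ * r ^ 2 / 3) ∧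
      HasDerivWithinAt ω
        ((ωh ^ 2 - 1) * ωh / (rh - Λ * rh ^ 3 - (ωh ^ 2 - 1) ^ 2 / rh))
        (Ici rh) rh := by
  have hK : 0 < KK Λ rh ωh := KK_pos hrh hreg
  obtain ⟨ε, he⟩ := exists_eok hrh hK
  obtain ⟨v, hb, hfix⟩ := exists_fixed_point hrh hK he
  have hv : Continuous v := hb.1
  have hε1 := he.2.1
  have hNcont : Continuous (Nf Λ rh ωh v) := continuous_Nf hrh hv
  have hSint : Continuous (fun s => 2 * v s ^ 2 / rho rh s) :=
    Continuous.div (by fun_prop) continuous_rho (fun s => rho_ne hrh s)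
  have hprim : Continuous (fun r => ∫ s in rh..r, 2 * v s ^ 2 / rho rh s) :=
    continuous_primitive hSint rh
  have hmcont : Continuous (fun r => r / 2 * (1 - Λ * r ^ 2 / 3 - Nf Λ rh ωh v r)) :=
    Continuous.mul (continuous_id.div_const 2)
      ((continuous_const.sub ((continuous_const.mul (continuous_pow 2)).div_const 3)).sub hNcont)
  have hmemIcc : ∀ {r : ℝ}, r ∈ Set.Ioo rh (rh + ε) → r ∈ Set.Icc rh (rh + ε) :=
    fun hr => ⟨hr.1.le, hr.2.le⟩
  have hne : ∀ {r : ℝ}, r ∈ Set.Ioo rh (rh + ε) → r ≠ 0 :=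
    fun hr => (lt_trans hrh hr.1).ne'
  have hNpos : ∀ r ∈ Set.Ioo rh (rh + ε), 0 < Nf Λ rh ωh v r := by
    intro r hr
    refine lt_of_lt_of_le ?_ (Nf_lower hrh hK hv he hb (hmemIcc hr))
    have := cN_pos (Λ := Λ) (rh := rh) (ωh := ωh) hK
    nlinarith [hr.1]
  have hZpos : ∀ r ∈ Set.Ioo rh (rh + ε), 0 < Zf Λ rh ωh v r :=
    fun r hr => Zf_pos hrh hK hv he hb (hmemIcc hr) hr.1
  have hωderiv : deriv (Om rh ωh v) = v := funext fun r => (hasDerivAt_Om hv r).deriv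
  have hvIoo : ∀ r ∈ Set.Ioo rh (rh + ε),
      v r = (∫ s in rh..r, Gf Λ rh ωh v s) / Zf Λ rh ωh v r := by
    intro r hr
    rw [hfix r (hmemIcc hr)]
    unfold Tf
    rw [if_neg (not_le.2 hr.1)]
  have hvZ : ∀ r ∈ Set.Ioo rh (rh + ε),
      v r * Zf Λ rh ωh v r = ∫ s in rh..r, Gf Λ rh ωh v s := by
    intro r hr
    rw [hvIoo r hr, div_mul_cancel₀ _ (hZpos r hr).ne']
  have hvderiv : ∀ r ∈ Set.Ioo rh (rh + ε),
      HasDerivAt v ((Gf Λ rh ωh v r - Z'f Λ rh ωh v r * v r) / Zf Λ rh ωh v r) r := by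
    intro r hr
    have hZ := (hZpos r hr).ne'
    have hW := HasDerivAt.div
      (hasDerivAt_primitive (continuous_Gf (Λ := Λ) (ωh := ωh) hrh hv) rh r)
      (hasDerivAt_Zf (Λ := Λ) (ωh := ωh) hrh hv r) hZ
    have heqd : (Gf Λ rh ωh v r * Zf Λ rh ωh v r
        - (∫ s in rh..r, Gf Λ rh ωh v s) * Z'f Λ rh ωh v r) / Zf Λ rh ωh v r ^ 2
        = (Gf Λ rh ωh v r - Z'f Λ rh ωh v r * v r) / Zf Λ rh ωh v r := by
      rw [← hvZ r hr]
      field_simp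
    rw [heqd] at hW
    refine HasDerivAt.congr_of_eventuallyEq hW ?_
    filter_upwards [isOpen_Ioo.mem_nhds hr] with x hx
    exact hvIoo x hx
  have hv'cont : ContinuousOn
      (fun r => (Gf Λ rh ωh v r - Z'f Λ rh ωh v r * v r) / Zf Λ rh ωh v r)
      (Set.Ioo rh (rh + ε)) :=
    ContinuousOn.div ((continuous_Gf hrh hv).sub
      ((continuous_Z'f hrh hv).mul hv)).continuousOn
      (continuous_Zf hrh hv).continuousOn (fun r hr => (hZpos r hr).ne')
  have hvC1 : ContDiffOn ℝ 1 v (Set.Ioo rh (rh + ε)) :=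
    contDiffOn_one_of_deriv isOpen_Ioo hvderiv hv'cont
  have hωC2 : ContDiffOn ℝ 2 (Om rh ωh v) (Set.Ioo rh (rh + ε)) :=
    contDiffOn_two_of_deriv isOpen_Ioo (fun r _ => hasDerivAt_Om hv r) hvC1
  have hωC1 : ContDiffOn ℝ 1 (Om rh ωh v) (Set.Ioo rh (rh + ε)) := hωC2.of_le (by norm_num)
  have hNC1 : ContDiffOn ℝ 1 (Nf Λ rh ωh v) (Set.Ioo rh (rh + ε)) :=
    contDiffOn_one_of_deriv isOpen_Ioo (fun r _ => hasDerivAt_Nf hrh hv r)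
      (((continuous_qf_comp hrh hv).sub ((continuous_pf hrh hv).mul hNcont)).continuousOn)
  have hidC : ∀ n : WithTop ℕ∞, ContDiffOn ℝ n (fun r : ℝ => r) (Set.Ioo rh (rh + ε)) :=
    fun n => contDiffOn_id
  have hN'C1 : ContDiffOn ℝ 1
      (fun r => qf Λ (rho rh r) (Om rh ωh v r) - pf rh v r * Nf Λ rh ωh v r)
      (Set.Ioo rh (rh + ε)) := by
    refine ContDiffOn.congr (f := fun r =>
      (1 - Λ * r ^ 2 - (Om rh ωh v r ^ 2 - 1) ^ 2 / r ^ 2) / r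
        - (1 + 2 * v r ^ 2) / r * Nf Λ rh ωh v r) ?_ ?_
    · refine ContDiffOn.sub (ContDiffOn.div ?_ (hidC 1) (fun r hr => hne hr))
        (ContDiffOn.mul (ContDiffOn.div ?_ (hidC 1) (fun r hr => hne hr)) hNC1)
      · refine ContDiffOn.sub (ContDiffOn.sub contDiffOn_const
          (contDiffOn_const.mul ((hidC 1).pow 2))) ?_
        exact ContDiffOn.div (((hωC1.pow 2).sub contDiffOn_const).pow 2) ((hidC 1).pow 2)
          (fun r hr => pow_ne_zero 2 (hne hr))
      · exact contDiffOn_const.add (contDiffOn_const.mul (hvC1.pow 2))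
    · intro r hr
      simp only [qf, pf]
      rw [rho_eq hr.1.le]
  have hNC2 : ContDiffOn ℝ 2 (Nf Λ rh ωh v) (Set.Ioo rh (rh + ε)) :=
    contDiffOn_two_of_deriv isOpen_Ioo (fun r _ => hasDerivAt_Nf hrh hv r) hN'C1
  have hSderiv : ∀ r : ℝ, HasDerivAt (fun r => exp (∫ s in rh..r, 2 * v s ^ 2 / rho rh s))
      (exp (∫ s in rh..r, 2 * v s ^ 2 / rho rh s) * (2 * v r ^ 2 / rho rh r)) r :=
    fun r => (hasDerivAt_primitive hSint rh r).exp
  refine ⟨ε, he.1, fun r => r / 2 * (1 - Λ * r ^ 2 / 3 - Nf Λ rh ωh v r), Om rh ωh v,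
    fun r => exp (∫ s in rh..r, 2 * v s ^ 2 / rho rh s), ?_, ?_, ?_, ?_, ?_, ?_, ?_, ?_, ?_,
    ?_, ?_, ?_, ?_, ?_⟩
  · exact hmcont.continuousOn
  · exact (continuous_Om hv).continuousOn
  · exact (hprim.rexp).continuousOn
  · -- m is C²
    refine ContDiffOn.mul ((hidC 2).div_const 2) ?_
    exact ContDiffOn.sub (ContDiffOn.sub contDiffOn_const
      ((contDiffOn_const.mul ((hidC 2).pow 2)).div_const 3)) hNC2
  · exact hωC2
  · -- S is C²
    refine contDiffOn_two_of_deriv isOpen_Ioo (fun r _ => hSderiv r) ?_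
    refine ContDiffOn.congr (f := fun r =>
      exp (∫ s in rh..r, 2 * v s ^ 2 / rho rh s) * (2 * v r ^ 2 / r)) ?_ ?_
    · refine ContDiffOn.mul
        (contDiffOn_one_of_deriv isOpen_Ioo (fun r _ => hSderiv r)
          ((hprim.rexp.mul hSint).continuousOn)) ?_
      exact ContDiffOn.div (contDiffOn_const.mul (hvC1.pow 2)) (hidC 1) (fun r hr => hne hr)
    · intro r hr
      rw [rho_eq hr.1.le]
  · -- E1
    intro r hr
    have h1 : HasDerivAt (fun x : ℝ => x / 2) ((1:ℝ) / 2) r := (hasDerivAt_id r).div_const 2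
    have h3 : HasDerivAt (fun x : ℝ => 1 - Λ * x ^ 2 / 3) (-(Λ * (2 * r) / 3)) r := by
      have h4 := ((hasDerivAt_pow 2 r).const_mul Λ).div_const 3
      have h5 := h4.const_sub 1
      refine h5.congr_deriv ?_
      simp
    have h2 := h3.sub (hasDerivAt_Nf (Λ := Λ) (ωh := ωh) hrh hv r)
    have hm' := h1.mul h2
    rw [show deriv (fun r => r / 2 * (1 - Λ * r ^ 2 / 3 - Nf Λ rh ωh v r)) r = _ from hm'.deriv,
      hωderiv, rho_eq hr.1.le]
    simp only [Pi.sub_apply]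
    have hNr := hNpos r hr
    have hrne := hne hr
    unfold qf pf
    rw [rho_eq hr.1.le]
    field_simp
    ring
  · -- E2
    intro r hr
    rw [(hSderiv r).deriv, hωderiv, rho_eq hr.1.le]
    beta_reduce
    ring
  · -- E3
    intro r hr
    have hZ := (hZpos r hr).ne'
    have hNne := (hNpos r hr).ne'
    have hrne := hne hr
    rw [hωderiv, (hvderiv r hr).deriv]
    have hωb := Om_abs hb hε1 (hmemIcc hr)
    unfold Zf at hZ
    show r ^ 2 * (1 - 2 * (r / 2 * (1 - Λ * r ^ 2 / 3 - Nf Λ rh ωh v r)) / r - Λ * r ^ 2 / 3)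
        * ((Gf Λ rh ωh v r - Z'f Λ rh ωh v r * v r) / Zf Λ rh ωh v r)
      + (2 * (r / 2 * (1 - Λ * r ^ 2 / 3 - Nf Λ rh ωh v r)) - 2 * Λ * r ^ 3 / 3
          - (Om rh ωh v r ^ 2 - 1) ^ 2 / r) * v r
      + (1 - Om rh ωh v r ^ 2) * Om rh ωh v r = 0
    unfold Gf Z'f Zf qf pf
    rw [rho_eq hr.1.le]
    field_simp
    ring
  · -- m at rh
    show rh / 2 * (1 - Λ * rh ^ 2 / 3 - Nf Λ rh ωh v rh) = rh / 2 - Λ * rh ^ 3 / 6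
    rw [Nf_rh]
    ring
  · exact Om_rh
  · -- S at rh
    show exp (∫ s in rh..rh, 2 * v s ^ 2 / rho rh s) = 1
    rw [intervalIntegral.integral_same, exp_zero]
  · -- N positive
    intro r hr
    show 0 < 1 - 2 * (r / 2 * (1 - Λ * r ^ 2 / 3 - Nf Λ rh ωh v r)) / r - Λ * r ^ 2 / 3
    have hrne := hne hr
    have hNr := hNpos r hr
    have : 1 - 2 * (r / 2 * (1 - Λ * r ^ 2 / 3 - Nf Λ rh ωh v r)) / r - Λ * r ^ 2 / 3
        = Nf Λ rh ωh v r := by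
      field_simp
      ring
    rw [this]
    exact hNr
  · -- derivative at the horizon
    have h := (hasDerivAt_Om (rh := rh) (ωh := ωh) hv rh).hasDerivWithinAt (s := Set.Ici rh)
    rw [hb.2.1, vh_eq hrh] at h
    exact h
end

section
/- Local existence at infinity (Lemma 2): Let Λ < 0 and let M, ω_∞, a ∈ ℝ. Then there exist R > 0 and functions m, ω, S : (R, ∞) → ℝ, twice continuously differentiable, satisfying the field equations (E1)–(E3) on (R, ∞), such that N(r) > 0 for all r > R, m(r) → M, ω(r) → ω_∞, r·(ω(r) − ω_∞) → a, and S(r) → 1 as r → ∞. -/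
open Set Filter

noncomputable section LEAux

abbrev P5 : Type := ℝ × ℝ × ℝ × ℝ × ℝ

def leaD (Λ : ℝ) (p : P5) : ℝ := p.1 ^ 2 - 2 * p.2.2.2.1 * p.1 ^ 3 - Λ / 3

def leaF (Λ : ℝ) (p : P5) : P5 :=
  (1, p.2.2.1,
    -((2 * p.1 - 6 * p.2.2.2.1 * p.1 ^ 2 + p.1 ^ 3 * (p.2.1 ^ 2 - 1) ^ 2) * p.2.2.1
        + (1 - p.2.1 ^ 2) * p.2.1) / leaD Λ p,
    -(leaD Λ p * p.2.2.1 ^ 2 + (p.2.1 ^ 2 - 1) ^ 2 / 2),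
    -(2 * p.2.2.2.2 * p.1 ^ 3 * p.2.2.1 ^ 2))

lemma leaD_contDiff (Λ : ℝ) : ContDiff ℝ 1 (leaD Λ) := by
  have c1 : ContDiff ℝ 1 (fun p : P5 => p.1) := contDiff_fst
  have c4 : ContDiff ℝ 1 (fun p : P5 => p.2.2.2.1) :=
    contDiff_fst.comp (contDiff_snd.comp (contDiff_snd.comp contDiff_snd))
  exact ((c1.pow 2).sub ((contDiff_const.mul c4).mul (c1.pow 3))).sub contDiff_const

lemma leaF_contDiffAt (Λ : ℝ) {p₀ : P5} (h : leaD Λ p₀ ≠ 0) :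
    ContDiffAt ℝ 1 (leaF Λ) p₀ := by
  have c1 : ContDiff ℝ 1 (fun p : P5 => p.1) := contDiff_fst
  have c2 : ContDiff ℝ 1 (fun p : P5 => p.2.1) := contDiff_fst.comp contDiff_snd
  have c3 : ContDiff ℝ 1 (fun p : P5 => p.2.2.1) :=
    contDiff_fst.comp (contDiff_snd.comp contDiff_snd)
  have c4 : ContDiff ℝ 1 (fun p : P5 => p.2.2.2.1) :=
    contDiff_fst.comp (contDiff_snd.comp (contDiff_snd.comp contDiff_snd))
  have c5 : ContDiff ℝ 1 (fun p : P5 => p.2.2.2.2) :=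
    contDiff_snd.comp (contDiff_snd.comp (contDiff_snd.comp contDiff_snd))
  have cD : ContDiff ℝ 1 (leaD Λ) := leaD_contDiff Λ
  have cnum : ContDiff ℝ 1 (fun p : P5 =>
      (2 * p.1 - 6 * p.2.2.2.1 * p.1 ^ 2 + p.1 ^ 3 * (p.2.1 ^ 2 - 1) ^ 2) * p.2.2.1
        + (1 - p.2.1 ^ 2) * p.2.1) := by
    exact ((((contDiff_const.mul c1).sub ((contDiff_const.mul c4).mul (c1.pow 2))).add
      ((c1.pow 3).mul (((c2.pow 2).sub contDiff_const).pow 2))).mul c3).add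
      (((contDiff_const.sub (c2.pow 2))).mul c2)
  refine ContDiffAt.prodMk contDiff_const.contDiffAt (ContDiffAt.prodMk c3.contDiffAt
    (ContDiffAt.prodMk ?_ (ContDiffAt.prodMk ?_ ?_)))
  · exact (cnum.contDiffAt.neg).div cD.contDiffAt h
  · exact (((cD.mul (c3.pow 2)).add (((c2.pow 2).sub contDiff_const).pow 2 |>.div_const 2)).neg).contDiffAt
  · exact (((contDiff_const.mul c5).mul (c1.pow 3)).mul (c3.pow 2)).neg.contDiffAt

lemma pfst {E F : Type*} [NormedAddCommGroup E] [NormedSpace ℝ E]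
    [NormedAddCommGroup F] [NormedSpace ℝ F] {f : ℝ → E × F} {y : E × F} {t : ℝ}
    (h : HasDerivAt f y t) : HasDerivAt (fun s => (f s).1) y.1 t := by
  simpa [Function.comp_def] using ((ContinuousLinearMap.fst ℝ E F).hasFDerivAt (x := f t)).comp_hasDerivAt t h

lemma psnd {E F : Type*} [NormedAddCommGroup E] [NormedSpace ℝ E]
    [NormedAddCommGroup F] [NormedSpace ℝ F] {f : ℝ → E × F} {y : E × F} {t : ℝ}
    (h : HasDerivAt f y t) : HasDerivAt (fun s => (f s).2) y.2 t := by
  simpa [Function.comp_def] using ((ContinuousLinearMap.snd ℝ E F).hasFDerivAt (x := f t)).comp_hasDerivAt t h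

lemma const_of_deriv_zero {g : ℝ → ℝ} {ε : ℝ}
    (hg : ∀ t ∈ Ioo (-ε) ε, HasDerivAt g 0 t) : ∀ t ∈ Ioo (-ε) ε, g t = g 0 := by
  intro t ht
  rcases le_or_gt 0 t with h0 | h0
  · have hsub : Icc (0:ℝ) t ⊆ Ioo (-ε) ε := fun x hx =>
      ⟨by have := ht.1; have := ht.2; have := hx.1; linarith,
       by have := ht.2; have := hx.2; linarith⟩
    exact constant_of_has_deriv_right_zero
      (fun x hx => ((hg x (hsub hx)).continuousAt).continuousWithinAt)
      (fun x hx => ((hg x (hsub (Ico_subset_Icc_self hx))).hasDerivWithinAt))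
      t (by constructor <;> linarith)
  · have hsub : Icc t (0:ℝ) ⊆ Ioo (-ε) ε := fun x hx =>
      ⟨by have := ht.1; have := hx.1; linarith,
       by have := ht.1; have := hx.2; linarith⟩
    have := constant_of_has_deriv_right_zero
      (fun x hx => ((hg x (hsub hx)).continuousAt).continuousWithinAt)
      (fun x hx => ((hg x (hsub (Ico_subset_Icc_self hx))).hasDerivWithinAt))
      0 (by constructor <;> linarith)
    exact this.symm

end LEAux

set_option maxHeartbeats 2000000 in
/-- Local existence at infinity (Lemma 2). -/
theorem local_existence_at_infinity (Λ M ω_inf a : ℝ) (hΛ : Λ < 0) :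
    ∃ R > (0 : ℝ), ∃ m ω S : ℝ → ℝ,
      ContDiffOn ℝ 2 m (Ioi R) ∧
      ContDiffOn ℝ 2 ω (Ioi R) ∧
      ContDiffOn ℝ 2 S (Ioi R) ∧
      (∀ r ∈ Ioi R,
        deriv m r = (1 - 2 * m r / r - Λ * r ^ 2 / 3) * (deriv ω r) ^ 2
          + (ω r ^ 2 - 1) ^ 2 / (2 * r ^ 2)) ∧
      (∀ r ∈ Ioi R,
        deriv S r = 2 * S r * (deriv ω r) ^ 2 / r) ∧
      (∀ r ∈ Ioi R,
        r ^ 2 * (1 - 2 * m r / r - Λ * r ^ 2 / 3) * deriv (deriv ω) r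
          + (2 * m r - 2 * Λ * r ^ 3 / 3 - (ω r ^ 2 - 1) ^ 2 / r) * deriv ω r
          + (1 - ω r ^ 2) * ω r = 0) ∧
      (∀ r ∈ Ioi R, 0 < 1 - 2 * m r / r - Λ * r ^ 2 / 3) ∧
      Tendsto m atTop (nhds M) ∧
      Tendsto ω atTop (nhds ω_inf) ∧
      Tendsto (fun r => r * (ω r - ω_inf)) atTop (nhds a) ∧
      Tendsto S atTop (nhds 1) := by
  classical
  set x₀ : P5 := (0, ω_inf, a, M, 1) with hx₀
  have hD0 : leaD Λ x₀ ≠ 0 := by simp only [leaD, hx₀]; norm_num; linarith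
  obtain ⟨f, hf0, ε, hε, hfd⟩ := (leaF_contDiffAt Λ hD0).exists_forall_mem_closedBall_exists_eq_forall_mem_Ioo_hasDerivAt₀ 0
  have hf' : ∀ t ∈ Ioo (-ε) ε, HasDerivAt f (leaF Λ (f t)) t := by
    intro t ht; exact hfd t (by simpa using ht)
  -- the first component of `f` is the identity
  have hgz : ∀ t ∈ Ioo (-ε) ε, HasDerivAt (fun s => (f s).1 - s) 0 t := by
    intro t ht
    have h1 : HasDerivAt (fun s => (f s).1) (leaF Λ (f t)).1 t := pfst (hf' t ht)
    have : (leaF Λ (f t)).1 = 1 := rfl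
    rw [this] at h1
    rw [← sub_self (1:ℝ)]; exact h1.sub (hasDerivAt_id' t)
  have hz : ∀ t ∈ Ioo (-ε) ε, (f t).1 = t := by
    intro t ht
    have := const_of_deriv_zero hgz t ht
    have h0 : (f 0).1 = 0 := by rw [hf0]
    simp only [h0] at this
    linarith [this]
  -- shrink the interval so that the denominator stays positive
  have h0mem : (0:ℝ) ∈ Ioo (-ε) ε := by constructor <;> linarith
  have hfc0 : ContinuousAt f 0 := (hf' 0 h0mem).differentiableAt.continuousAt
  have hDf0 : leaD Λ (f 0) = -Λ / 3 := by rw [hf0]; simp [leaD, hx₀]; ring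
  have hDc : ContinuousAt (fun t => leaD Λ (f t)) 0 :=
    ((leaD_contDiff Λ).continuous.continuousAt).comp hfc0
  have hDpos0 : (0:ℝ) < leaD Λ (f 0) := by rw [hDf0]; linarith
  have hev : ∀ᶠ t in nhds (0:ℝ), 0 < leaD Λ (f t) := hDc.eventually (eventually_gt_nhds hDpos0)
  obtain ⟨δ, hδpos, hδ⟩ := Metric.eventually_nhds_iff.mp hev
  set ε₁ : ℝ := min δ ε / 2 with hε₁def
  have hε₁pos : 0 < ε₁ := by positivity
  have hε₁ε : ε₁ < ε := by
    have : min δ ε ≤ ε := min_le_right _ _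
    simp only [hε₁def]; linarith
  have hε₁δ : ε₁ < δ := by
    have : min δ ε ≤ δ := min_le_left _ _
    simp only [hε₁def]; linarith
  have hsub : Ioo (-ε₁) ε₁ ⊆ Ioo (-ε) ε := fun x hx =>
    ⟨by have := hx.1; linarith, by have := hx.2; linarith⟩
  -- component functions
  set uf : ℝ → ℝ := fun t => (f t).2.1 with hufdef
  set vf : ℝ → ℝ := fun t => (f t).2.2.1 with hvfdef
  set mf : ℝ → ℝ := fun t => (f t).2.2.2.1 with hmfdef
  set Sf : ℝ → ℝ := fun t => (f t).2.2.2.2 with hSfdef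
  -- positivity of the denominator, expressed via the components
  have hdd : ∀ t ∈ Ioo (-ε₁) ε₁, (0:ℝ) < t ^ 2 - 2 * mf t * t ^ 3 - Λ / 3 := by
    intro t ht
    have h1 : 0 < leaD Λ (f t) := hδ (by
      simp only [Real.dist_eq, sub_zero]
      have := ht.1; have := ht.2
      rw [abs_lt]; constructor <;> linarith)
    have h2 : leaD Λ (f t) = t ^ 2 - 2 * mf t * t ^ 3 - Λ / 3 := by
      simp only [leaD, hmfdef, hz t (hsub ht)]
    rwa [h2] at h1
  -- derivative facts on the smaller interval
  have hu : ∀ t ∈ Ioo (-ε₁) ε₁, HasDerivAt uf (vf t) t := by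
    intro t ht
    exact pfst (psnd (hf' t (hsub ht)))
  have hv : ∀ t ∈ Ioo (-ε₁) ε₁, HasDerivAt vf
      (-((2 * t - 6 * mf t * t ^ 2 + t ^ 3 * (uf t ^ 2 - 1) ^ 2) * vf t
          + (1 - uf t ^ 2) * uf t) / (t ^ 2 - 2 * mf t * t ^ 3 - Λ / 3)) t := by
    intro t ht
    have h1 := pfst (psnd (psnd (hf' t (hsub ht))))
    have h2 : (leaF Λ (f t)).2.2.1
        = -((2 * t - 6 * mf t * t ^ 2 + t ^ 3 * (uf t ^ 2 - 1) ^ 2) * vf t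
          + (1 - uf t ^ 2) * uf t) / (t ^ 2 - 2 * mf t * t ^ 3 - Λ / 3) := by
      simp only [leaF, leaD, hufdef, hvfdef, hmfdef, hz t (hsub ht)]
    rwa [h2] at h1
  have hm : ∀ t ∈ Ioo (-ε₁) ε₁, HasDerivAt mf
      (-((t ^ 2 - 2 * mf t * t ^ 3 - Λ / 3) * vf t ^ 2 + (uf t ^ 2 - 1) ^ 2 / 2)) t := by
    intro t ht
    have h1 := pfst (psnd (psnd (psnd (hf' t (hsub ht)))))
    have h2 : (leaF Λ (f t)).2.2.2.1
        = -((t ^ 2 - 2 * mf t * t ^ 3 - Λ / 3) * vf t ^ 2 + (uf t ^ 2 - 1) ^ 2 / 2) := by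
      simp only [leaF, leaD, hufdef, hvfdef, hmfdef, hz t (hsub ht)]
    rwa [h2] at h1
  have hs : ∀ t ∈ Ioo (-ε₁) ε₁, HasDerivAt Sf (-(2 * Sf t * t ^ 3 * vf t ^ 2)) t := by
    intro t ht
    have h1 := psnd (psnd (psnd (psnd (hf' t (hsub ht)))))
    have h2 : (leaF Λ (f t)).2.2.2.2 = -(2 * Sf t * t ^ 3 * vf t ^ 2) := by
      simp only [leaF, hSfdef, hvfdef, hz t (hsub ht)]
    rwa [h2] at h1
  -- continuity of the components on the interval
  have hufc : ContinuousOn uf (Ioo (-ε₁) ε₁) := fun t ht =>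
    ((hu t ht).differentiableAt.continuousAt).continuousWithinAt
  have hvfc : ContinuousOn vf (Ioo (-ε₁) ε₁) := fun t ht =>
    ((hv t ht).differentiableAt.continuousAt).continuousWithinAt
  have hmfc : ContinuousOn mf (Ioo (-ε₁) ε₁) := fun t ht =>
    ((hm t ht).differentiableAt.continuousAt).continuousWithinAt
  have hSfc : ContinuousOn Sf (Ioo (-ε₁) ε₁) := fun t ht =>
    ((hs t ht).differentiableAt.continuousAt).continuousWithinAt
  have hIop : IsOpen (Ioo (-ε₁) ε₁) := isOpen_Ioo
  have hone : (1 : WithTop ℕ∞) = 0 + 1 := by norm_num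
  have hC1 : ∀ g : ℝ → ℝ, ∀ g' : ℝ → ℝ, (∀ t ∈ Ioo (-ε₁) ε₁, HasDerivAt g (g' t) t) →
      ContinuousOn g' (Ioo (-ε₁) ε₁) → ContDiffOn ℝ 1 g (Ioo (-ε₁) ε₁) := by
    intro g g' hg hg'
    rw [hone, contDiffOn_succ_iff_deriv_of_isOpen hIop]
    refine ⟨fun t ht => (hg t ht).differentiableAt.differentiableWithinAt, by simp, ?_⟩
    rw [contDiffOn_zero]
    exact hg'.congr fun t ht => (hg t ht).deriv
  have hC2 : ∀ g : ℝ → ℝ, ∀ g' : ℝ → ℝ, (∀ t ∈ Ioo (-ε₁) ε₁, HasDerivAt g (g' t) t) →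
      ContDiffOn ℝ 1 g' (Ioo (-ε₁) ε₁) → ContDiffOn ℝ 2 g (Ioo (-ε₁) ε₁) := by
    intro g g' hg hg'
    have h2 : (2 : WithTop ℕ∞) = 1 + 1 := by norm_num
    rw [h2, contDiffOn_succ_iff_deriv_of_isOpen hIop]
    refine ⟨fun t ht => (hg t ht).differentiableAt.differentiableWithinAt, by simp, ?_⟩
    exact hg'.congr fun t ht => (hg t ht).deriv
  have hufC1 : ContDiffOn ℝ 1 uf (Ioo (-ε₁) ε₁) := hC1 uf vf hu hvfc
  have hddne : ∀ t ∈ Ioo (-ε₁) ε₁, t ^ 2 - 2 * mf t * t ^ 3 - Λ / 3 ≠ 0 :=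
    fun t ht => ne_of_gt (hdd t ht)
  have hid : ContinuousOn (fun t : ℝ => t) (Ioo (-ε₁) ε₁) := continuousOn_id
  have hgvC : ContinuousOn (fun t =>
      -((2 * t - 6 * mf t * t ^ 2 + t ^ 3 * (uf t ^ 2 - 1) ^ 2) * vf t
          + (1 - uf t ^ 2) * uf t) / (t ^ 2 - 2 * mf t * t ^ 3 - Λ / 3)) (Ioo (-ε₁) ε₁) := by
    apply ContinuousOn.div _ _ hddne
    · exact (((((continuousOn_const.mul hid).sub
        ((continuousOn_const.mul hmfc).mul (hid.pow 2))).add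
        ((hid.pow 3).mul (((hufc.pow 2).sub continuousOn_const).pow 2))).mul hvfc).add
        ((continuousOn_const.sub (hufc.pow 2)).mul hufc)).neg
    · exact ((hid.pow 2).sub ((continuousOn_const.mul hmfc).mul (hid.pow 3))).sub
        continuousOn_const
  have hvfC1 : ContDiffOn ℝ 1 vf (Ioo (-ε₁) ε₁) := hC1 vf _ hv hgvC
  have hgmC : ContinuousOn (fun t =>
      -((t ^ 2 - 2 * mf t * t ^ 3 - Λ / 3) * vf t ^ 2 + (uf t ^ 2 - 1) ^ 2 / 2))
      (Ioo (-ε₁) ε₁) := by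
    exact (((((hid.pow 2).sub ((continuousOn_const.mul hmfc).mul (hid.pow 3))).sub
      continuousOn_const).mul (hvfc.pow 2)).add
      ((((hufc.pow 2).sub continuousOn_const).pow 2).div continuousOn_const
        (fun t _ => two_ne_zero))).neg
  have hmfC1 : ContDiffOn ℝ 1 mf (Ioo (-ε₁) ε₁) := hC1 mf _ hm hgmC
  have hgsC : ContinuousOn (fun t => -(2 * Sf t * t ^ 3 * vf t ^ 2)) (Ioo (-ε₁) ε₁) :=
    (((continuousOn_const.mul hSfc).mul (hid.pow 3)).mul (hvfc.pow 2)).neg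
  have hSfC1 : ContDiffOn ℝ 1 Sf (Ioo (-ε₁) ε₁) := hC1 Sf _ hs hgsC
  have hidC1 : ContDiffOn ℝ 1 (fun t : ℝ => t) (Ioo (-ε₁) ε₁) := contDiffOn_id
  have hufC2 : ContDiffOn ℝ 2 uf (Ioo (-ε₁) ε₁) := hC2 uf vf hu hvfC1
  have hmfC2 : ContDiffOn ℝ 2 mf (Ioo (-ε₁) ε₁) := by
    refine hC2 mf _ hm ?_
    exact (((((hidC1.pow 2).sub ((contDiffOn_const.mul hmfC1).mul (hidC1.pow 3))).sub
      contDiffOn_const).mul (hvfC1.pow 2)).add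
      ((((hufC1.pow 2).sub contDiffOn_const).pow 2).div contDiffOn_const
        (fun t _ => two_ne_zero))).neg
  have hSfC2 : ContDiffOn ℝ 2 Sf (Ioo (-ε₁) ε₁) := by
    refine hC2 Sf _ hs ?_
    exact (((contDiffOn_const.mul hSfC1).mul (hidC1.pow 3)).mul (hvfC1.pow 2)).neg
  -- now pass to the variable r = 1/z
  have hRpos : (0:ℝ) < ε₁⁻¹ := by positivity
  have hrfacts : ∀ r ∈ Ioi ε₁⁻¹, 0 < r ∧ r ≠ 0 ∧ r⁻¹ ∈ Ioo (-ε₁) ε₁ := by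
    intro r hr
    have hrpos : 0 < r := lt_trans hRpos hr
    have h1 : r⁻¹ < ε₁ := by
      rw [inv_lt_comm₀ hrpos hε₁pos]
      exact hr
    have h2 : -ε₁ < r⁻¹ := by
      have : 0 < r⁻¹ := by positivity
      linarith
    exact ⟨hrpos, ne_of_gt hrpos, ⟨h2, h1⟩⟩
  have hmaps : MapsTo (fun r : ℝ => r⁻¹) (Ioi ε₁⁻¹) (Ioo (-ε₁) ε₁) :=
    fun r hr => (hrfacts r hr).2.2
  have hinvC2 : ContDiffOn ℝ 2 (fun r : ℝ => r⁻¹) (Ioi ε₁⁻¹) := by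
    intro r hr
    exact (contDiffAt_inv ℝ (hrfacts r hr).2.1).contDiffWithinAt
  refine ⟨ε₁⁻¹, hRpos, (fun r => mf r⁻¹), (fun r => uf r⁻¹), (fun r => Sf r⁻¹),
    hmfC2.comp hinvC2 hmaps, hufC2.comp hinvC2 hmaps, hSfC2.comp hinvC2 hmaps,
    ?_, ?_, ?_, ?_, ?_, ?_, ?_, ?_⟩
  · -- (E1)
    intro r hr
    obtain ⟨hrpos, hr0, hz1⟩ := hrfacts r hr
    have hinvd : HasDerivAt (fun s : ℝ => s⁻¹) (-(r ^ 2)⁻¹) r := hasDerivAt_inv hr0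
    have hωd : HasDerivAt (fun s => uf s⁻¹) (vf r⁻¹ * -(r ^ 2)⁻¹) r :=
      (hu r⁻¹ hz1).comp r hinvd
    have hmd : HasDerivAt (fun s => mf s⁻¹)
        (-(((r⁻¹) ^ 2 - 2 * mf r⁻¹ * (r⁻¹) ^ 3 - Λ / 3) * vf r⁻¹ ^ 2
          + (uf r⁻¹ ^ 2 - 1) ^ 2 / 2) * -(r ^ 2)⁻¹) r :=
      (hm r⁻¹ hz1).comp r hinvd
    rw [hmd.deriv, hωd.deriv]
    field_simp
  · -- (E2)
    intro r hr
    obtain ⟨hrpos, hr0, hz1⟩ := hrfacts r hr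
    have hinvd : HasDerivAt (fun s : ℝ => s⁻¹) (-(r ^ 2)⁻¹) r := hasDerivAt_inv hr0
    have hωd : HasDerivAt (fun s => uf s⁻¹) (vf r⁻¹ * -(r ^ 2)⁻¹) r :=
      (hu r⁻¹ hz1).comp r hinvd
    have hSd : HasDerivAt (fun s => Sf s⁻¹)
        (-(2 * Sf r⁻¹ * (r⁻¹) ^ 3 * vf r⁻¹ ^ 2) * -(r ^ 2)⁻¹) r :=
      (hs r⁻¹ hz1).comp r hinvd
    rw [hSd.deriv, hωd.deriv]
    field_simp
  · -- (E3)
    intro r hr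
    obtain ⟨hrpos, hr0, hz1⟩ := hrfacts r hr
    have hinvd : HasDerivAt (fun s : ℝ => s⁻¹) (-(r ^ 2)⁻¹) r := hasDerivAt_inv hr0
    have hωd : HasDerivAt (fun s => uf s⁻¹) (vf r⁻¹ * -(r ^ 2)⁻¹) r :=
      (hu r⁻¹ hz1).comp r hinvd
    have hω'eq : deriv (deriv (fun s => uf s⁻¹)) r
        = deriv (fun s => vf s⁻¹ * -(s ^ 2)⁻¹) r := by
      apply Filter.EventuallyEq.deriv_eq
      filter_upwards [isOpen_Ioi.mem_nhds hr] with s hs'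
      obtain ⟨hspos, hs0, hsz⟩ := hrfacts s hs'
      exact (((hu s⁻¹ hsz).comp s (hasDerivAt_inv hs0))).deriv
    have hvd : HasDerivAt (fun s => vf s⁻¹)
        ((-((2 * r⁻¹ - 6 * mf r⁻¹ * (r⁻¹) ^ 2 + (r⁻¹) ^ 3 * (uf r⁻¹ ^ 2 - 1) ^ 2) * vf r⁻¹
          + (1 - uf r⁻¹ ^ 2) * uf r⁻¹) / ((r⁻¹) ^ 2 - 2 * mf r⁻¹ * (r⁻¹) ^ 3 - Λ / 3))
          * -(r ^ 2)⁻¹) r :=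
      (hv r⁻¹ hz1).comp r hinvd
    have hr2 : HasDerivAt (fun s : ℝ => -(s ^ 2)⁻¹) (2 * r / (r ^ 2) ^ 2) r := by
      have h : HasDerivAt (fun s : ℝ => -(s ^ 2)⁻¹) _ r := ((hasDerivAt_pow 2 r).inv (pow_ne_zero 2 hr0)).neg
      convert h using 1
      push_cast
      ring
    have hden := hddne r⁻¹ hz1
    have hden2 : r - 2 * mf r⁻¹ - Λ * r ^ 3 / 3 ≠ 0 := by
      have h3 : r - 2 * mf r⁻¹ - Λ * r ^ 3 / 3
          = r ^ 3 * (r⁻¹ ^ 2 - 2 * mf r⁻¹ * r⁻¹ ^ 3 - Λ / 3) := by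
        field_simp
      rw [h3]
      exact mul_ne_zero (pow_ne_zero 3 hr0) hden
    have hvval : -((2 * r⁻¹ - 6 * mf r⁻¹ * r⁻¹ ^ 2 + r⁻¹ ^ 3 * (uf r⁻¹ ^ 2 - 1) ^ 2) * vf r⁻¹
          + (1 - uf r⁻¹ ^ 2) * uf r⁻¹) / (r⁻¹ ^ 2 - 2 * mf r⁻¹ * r⁻¹ ^ 3 - Λ / 3)
        = -((2 * r ^ 2 - 6 * mf r⁻¹ * r + (uf r⁻¹ ^ 2 - 1) ^ 2) * vf r⁻¹
          + (1 - uf r⁻¹ ^ 2) * uf r⁻¹ * r ^ 3) / (r - 2 * mf r⁻¹ - Λ * r ^ 3 / 3) := by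
      rw [div_eq_div_iff hden hden2]
      field_simp
    rw [hvval] at hvd
    have hprod := hvd.mul hr2
    rw [hωd.deriv, hω'eq, show (fun s => vf s⁻¹ * -(s ^ 2)⁻¹) = ((fun s => vf s⁻¹) * fun s => -(s ^ 2)⁻¹) from rfl, hprod.deriv]
    beta_reduce
    generalize hU : uf r⁻¹ = U at hden2 ⊢
    generalize hV : vf r⁻¹ = V at hden2 ⊢
    generalize hMv : mf r⁻¹ = Mv at hden2 ⊢
    generalize hA : -((2 * r ^ 2 - 6 * Mv * r + (U ^ 2 - 1) ^ 2) * V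
          + (1 - U ^ 2) * U * r ^ 3) / (r - 2 * Mv - Λ * r ^ 3 / 3) = A
    have hArel : A * (r - 2 * Mv - Λ * r ^ 3 / 3)
        = -((2 * r ^ 2 - 6 * Mv * r + (U ^ 2 - 1) ^ 2) * V + (1 - U ^ 2) * U * r ^ 3) := by
      rw [← hA]
      exact div_mul_cancel₀ _ hden2
    field_simp [hr0]
    linear_combination 3 * hArel
  · -- N > 0
    intro r hr
    obtain ⟨hrpos, hr0, hz1⟩ := hrfacts r hr
    have h1 := hdd r⁻¹ hz1
    have h2 : 1 - 2 * mf r⁻¹ / r - Λ * r ^ 2 / 3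
        = r ^ 2 * ((r⁻¹) ^ 2 - 2 * mf r⁻¹ * (r⁻¹) ^ 3 - Λ / 3) := by
      field_simp
    rw [h2]
    exact mul_pos (by positivity) h1
  · -- m → M
    have hc : ContinuousAt mf 0 := (hm 0 ⟨by linarith, hε₁pos⟩).differentiableAt.continuousAt
    have hm0 : mf 0 = M := by simp only [hmfdef]; rw [hf0]
    have := hc.tendsto.comp tendsto_inv_atTop_zero
    rwa [hm0] at this
  · -- ω → ω_inf
    have hc : ContinuousAt uf 0 := (hu 0 ⟨by linarith, hε₁pos⟩).differentiableAt.continuousAt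
    have hu0 : uf 0 = ω_inf := by simp only [hufdef]; rw [hf0]
    have := hc.tendsto.comp tendsto_inv_atTop_zero
    rwa [hu0] at this
  · -- r (ω - ω_inf) → a
    have hu0 : uf 0 = ω_inf := by simp only [hufdef]; rw [hf0]
    have hv0 : vf 0 = a := by simp only [hvfdef]; rw [hf0]
    have hder : HasDerivAt uf a 0 := by
      have := hu 0 ⟨by linarith, hε₁pos⟩
      rwa [hv0] at this
    have hslope : Tendsto (slope uf 0) (nhdsWithin 0 {x | x ≠ 0}) (nhds a) :=
      hasDerivAt_iff_tendsto_slope.mp hder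
    have hinvT : Tendsto (fun r : ℝ => r⁻¹) atTop (nhdsWithin 0 {x | x ≠ 0}) :=
      tendsto_inv_atTop_nhdsGT_zero.mono_right
        (nhdsWithin_mono 0 (fun x hx => ne_of_gt hx))
    have hcomp := hslope.comp hinvT
    refine hcomp.congr' ?_
    filter_upwards [eventually_gt_atTop (0:ℝ)] with r hrpos
    have hr0 : r ≠ 0 := ne_of_gt hrpos
    simp only [Function.comp_apply, slope_def_field, hu0]
    field_simp
    ring
  · -- S → 1
    have hc : ContinuousAt Sf 0 := (hs 0 ⟨by linarith, hε₁pos⟩).differentiableAt.continuousAt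
    have hS0 : Sf 0 = 1 := by simp only [hSfdef]; rw [hf0]
    have := hc.tendsto.comp tendsto_inv_atTop_zero
    rwa [hS0] at this
end

section
/- Confinement near the centre of the phase plane: Let ω be a solution of ω''(τ) = (ω(τ)² − 1)·ω(τ) on a maximal interval of existence containing 0, with |ω(0)| < 1 and ω'(0)² < (ω(0)² − 1)²/2. Then ω extends to a (twice differentiable) solution on all of ℝ, and |ω(τ)| < 1 and ω'(τ)² ≤ 1/2 for every τ ∈ ℝ. -/
open Set intervalIntegral

noncomputable section PhasePlaneConfinementAux

/-- clamp to `[-1,1]` -/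
def ppCl (u : ℝ) : ℝ := max (-1) (min u 1)

lemma ppCl_abs_le (u : ℝ) : |ppCl u| ≤ 1 := by
  rw [abs_le]; constructor
  · exact le_max_left _ _
  · exact max_le (by norm_num) (min_le_right _ _)

lemma ppCl_eq (u : ℝ) (h : |u| ≤ 1) : ppCl u = u := by
  rw [abs_le] at h
  rw [ppCl, min_eq_left h.2, max_eq_right h.1]

lemma ppCl_dist (a b : ℝ) : |ppCl a - ppCl b| ≤ |a - b| := by
  rw [ppCl, ppCl, max_comm (-1) _, max_comm (-1) _]
  refine (abs_max_sub_max_le_abs _ _ _).trans ?_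
  refine (abs_min_sub_min_le_max a 1 b 1).trans ?_
  simp

/-- truncated nonlinearity -/
def ppF (u : ℝ) : ℝ := (ppCl u ^ 2 - 1) * ppCl u

lemma ppF_eq (u : ℝ) (h : |u| ≤ 1) : ppF u = (u ^ 2 - 1) * u := by rw [ppF, ppCl_eq u h]

lemma ppF_abs_le (u : ℝ) : |ppF u| ≤ 1 := by
  have h := ppCl_abs_le u
  rw [ppF, abs_mul]
  have h2 : ppCl u ^ 2 ≤ 1 := by nlinarith [abs_nonneg (ppCl u), sq_abs (ppCl u)]
  have h3 : |ppCl u ^ 2 - 1| ≤ 1 := by rw [abs_le]; constructor <;> nlinarith [sq_nonneg (ppCl u)]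
  calc |ppCl u ^ 2 - 1| * |ppCl u| ≤ 1 * 1 := by
        apply mul_le_mul h3 h (abs_nonneg _) (by norm_num)
    _ = 1 := by norm_num

lemma ppF_dist (a b : ℝ) : |ppF a - ppF b| ≤ 2 * |a - b| := by
  have ha := ppCl_abs_le a
  have hb := ppCl_abs_le b
  set u := ppCl a; set v := ppCl b
  have key : |ppF a - ppF b| ≤ 2 * |u - v| := by
    have : ppF a - ppF b = (u - v) * (u ^ 2 + u * v + v ^ 2 - 1) := by rw [ppF, ppF]; ring
    rw [this, abs_mul, mul_comm]
    apply mul_le_mul_of_nonneg_right _ (abs_nonneg _)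
    rw [abs_le]
    rw [abs_le] at ha hb
    constructor <;> nlinarith [sq_nonneg (u + v), sq_nonneg (u - v)]
  exact key.trans (by have := ppCl_dist a b; linarith [abs_nonneg (u - v)])

lemma ppCl_continuous : Continuous ppCl := by
  unfold ppCl; fun_prop

lemma ppF_continuous : Continuous ppF := by
  unfold ppF
  exact ((ppCl_continuous.pow 2).sub continuous_const).mul ppCl_continuous

/-- the truncated planar vector field -/
def ppV (x : ℝ × ℝ) : ℝ × ℝ := (ppCl x.2, ppF x.1)

lemma ppV_lipschitz : LipschitzWith 2 ppV := by
  apply LipschitzWith.of_dist_le_mul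
  intro x y
  rw [Prod.dist_eq, Prod.dist_eq]
  simp only [Real.dist_eq, ppV]
  rw [max_le_iff]
  constructor
  · calc |ppCl x.2 - ppCl y.2| ≤ |x.2 - y.2| := ppCl_dist _ _
      _ ≤ 2 * max |x.1 - y.1| |x.2 - y.2| := by
          have h1 := le_max_right |x.1 - y.1| |x.2 - y.2|
          have h0 := abs_nonneg (x.2 - y.2)
          nlinarith
  · calc |ppF x.1 - ppF y.1| ≤ 2 * |x.1 - y.1| := ppF_dist _ _
      _ ≤ 2 * max |x.1 - y.1| |x.2 - y.2| := by
          nlinarith [le_max_left |x.1 - y.1| |x.2 - y.2|, abs_nonneg (x.1 - y.1)]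

lemma ppV_norm_le (x : ℝ × ℝ) : ‖ppV x‖ ≤ 1 := by
  rw [Prod.norm_def]
  exact max_le (by simpa [Real.norm_eq_abs, ppV] using ppCl_abs_le x.2)
    (by simpa [Real.norm_eq_abs, ppV] using ppF_abs_le x.1)


lemma ppCl_one {t : ℝ} (h : 1 ≤ t) : ppCl t = 1 := by
  rw [ppCl, min_eq_right h, max_eq_right (by norm_num : (-1:ℝ) ≤ 1)]

lemma ppCl_negone {t : ℝ} (h : t ≤ -1) : ppCl t = -1 := by
  rw [ppCl, min_eq_left (by linarith : t ≤ 1), max_eq_left h]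

lemma ppCl_nonneg {t : ℝ} (h : 0 ≤ t) : 0 ≤ ppCl t :=
  le_trans (le_min h zero_le_one) (le_max_right _ _)

lemma ppCl_nonpos {t : ℝ} (h : t ≤ 0) : ppCl t ≤ 0 :=
  max_le (by norm_num) (le_trans (min_le_left _ _) h)

lemma ppF_one {t : ℝ} (h : 1 ≤ t) : ppF t = 0 := by
  rw [ppF, ppCl_one h]; ring

lemma ppF_negone {t : ℝ} (h : t ≤ -1) : ppF t = 0 := by
  rw [ppF, ppCl_negone h]; ring

lemma ppV_fst (x : ℝ × ℝ) : (ppV x).1 = ppCl x.2 := rfl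
lemma ppV_snd (x : ℝ × ℝ) : (ppV x).2 = ppF x.1 := rfl

/-- kinetic potential -/
def ppG (u : ℝ) : ℝ := ∫ t in (0:ℝ)..u, ppCl t
/-- potential of the truncated nonlinearity -/
def ppU (u : ℝ) : ℝ := ∫ t in (0:ℝ)..u, ppF t

lemma ppG_deriv (u : ℝ) : HasDerivAt ppG (ppCl u) u :=
  (ppCl_continuous.integral_hasStrictDerivAt 0 u).hasDerivAt

lemma ppU_deriv (u : ℝ) : HasDerivAt ppU (ppF u) u :=
  (ppF_continuous.integral_hasStrictDerivAt 0 u).hasDerivAt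

lemma mem_uIcc_abs {u t : ℝ} (hu : |u| ≤ 1) (ht : t ∈ uIcc (0:ℝ) u) : |t| ≤ 1 := by
  rw [abs_le] at hu ⊢
  rcases le_total 0 u with h | h
  · rw [uIcc_of_le h] at ht; exact ⟨by linarith [ht.1], le_trans ht.2 hu.2⟩
  · rw [uIcc_of_ge h] at ht; exact ⟨le_trans hu.1 ht.1, by linarith [ht.2]⟩

lemma ppG_eval {u : ℝ} (hu : |u| ≤ 1) : ppG u = u ^ 2 / 2 := by
  rw [ppG]
  rw [integral_congr (g := fun t => t) (fun t ht => ppCl_eq t (mem_uIcc_abs hu ht))]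
  simp [integral_id]

lemma ppU_eval {u : ℝ} (hu : |u| ≤ 1) : ppU u = u ^ 4 / 4 - u ^ 2 / 2 := by
  rw [ppU]
  rw [integral_congr (g := fun t => t ^ 3 - t) (fun t ht => by
    rw [ppF_eq t (mem_uIcc_abs hu ht)]; ring)]
  rw [integral_sub (f := fun t : ℝ => t ^ 3) (g := fun t : ℝ => t)
    ((continuous_pow 3).intervalIntegrable _ _) (continuous_id.intervalIntegrable _ _)]
  rw [integral_pow, integral_id]
  norm_num

lemma ppG_nonneg (u : ℝ) : 0 ≤ ppG u := by
  rcases le_total 0 u with h | h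
  · exact integral_nonneg h (fun t ht => ppCl_nonneg ht.1)
  · rw [ppG, integral_symm, ← intervalIntegral.integral_neg]
    apply integral_nonneg h (fun t ht => by
      have := ppCl_nonpos ht.2; linarith)

lemma ppG_ge {u : ℝ} (hu : 1 ≤ |u|) : 1 / 2 ≤ ppG u := by
  rcases le_or_gt 1 u with h | h
  · have e1 : ppG u = ppG 1 + ∫ t in (1:ℝ)..u, ppCl t := by
      rw [ppG, ppG, integral_add_adjacent_intervals
        (ppCl_continuous.intervalIntegrable _ _) (ppCl_continuous.intervalIntegrable _ _)]
    rw [e1, ppG_eval (by norm_num)]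
    have e2 : ∫ t in (1:ℝ)..u, ppCl t = u - 1 := by
      rw [integral_congr (g := fun _ => (1:ℝ)) (fun t ht => by
        apply ppCl_one
        exact (uIcc_of_le h ▸ ht : t ∈ Icc 1 u).1)]
      simp
    rw [e2]; norm_num; linarith
  · have hu' : u ≤ -1 := by
      rcases abs_cases u with ⟨h1, h2⟩ | ⟨h1, h2⟩ <;> linarith
    have e1 : ppG u = ppG (-1) + ∫ t in (-1:ℝ)..u, ppCl t := by
      rw [ppG, ppG, integral_add_adjacent_intervals
        (ppCl_continuous.intervalIntegrable _ _) (ppCl_continuous.intervalIntegrable _ _)]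
    rw [e1, ppG_eval (by norm_num)]
    have e2 : ∫ t in (-1:ℝ)..u, ppCl t = -(u + 1) := by
      rw [integral_symm, integral_congr (g := fun _ => (-1:ℝ)) (fun t ht => by
        apply ppCl_negone
        exact (uIcc_of_le hu' ▸ ht : t ∈ Icc u (-1)).2)]
      simp only [integral_const, smul_eq_mul]; ring
    rw [e2]; nlinarith

lemma ppU_const {u : ℝ} (hu : 1 ≤ |u|) : ppU u = -(1 / 4) := by
  rcases le_or_gt 1 u with h | h
  · have e1 : ppU u = ppU 1 + ∫ t in (1:ℝ)..u, ppF t := by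
      rw [ppU, ppU, integral_add_adjacent_intervals
        (ppF_continuous.intervalIntegrable _ _) (ppF_continuous.intervalIntegrable _ _)]
    rw [e1, ppU_eval (by norm_num)]
    have e2 : ∫ t in (1:ℝ)..u, ppF t = 0 := by
      rw [integral_congr (g := fun _ => (0:ℝ)) (fun t ht => 
        ppF_one (uIcc_of_le h ▸ ht : t ∈ Icc 1 u).1)]
      simp
    rw [e2]; norm_num
  · have hu' : u ≤ -1 := by
      rcases abs_cases u with ⟨h1, h2⟩ | ⟨h1, h2⟩ <;> linarith
    have e1 : ppU u = ppU (-1) + ∫ t in (-1:ℝ)..u, ppF t := by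
      rw [ppU, ppU, integral_add_adjacent_intervals
        (ppF_continuous.intervalIntegrable _ _) (ppF_continuous.intervalIntegrable _ _)]
    rw [e1, ppU_eval (by norm_num)]
    have e2 : ∫ t in (-1:ℝ)..u, ppF t = 0 := by
      rw [integral_symm, integral_congr (g := fun _ => (0:ℝ)) (fun t ht => 
        ppF_negone (uIcc_of_le hu' ▸ ht : t ∈ Icc u (-1)).2)]
      simp
    rw [e2]; norm_num

lemma ppU_nonpos {u : ℝ} : ppU u ≤ 0 := by
  rcases le_or_gt 1 (|u|) with h | h
  · rw [ppU_const h]; norm_num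
  · rw [ppU_eval h.le]
    have h2 : u ^ 2 ≤ 1 := by nlinarith [sq_abs u, abs_nonneg u]
    nlinarith [sq_nonneg u]

/-- Global existence for the truncated (bounded, globally Lipschitz) field. -/
lemma ppV_global_sol (x₀ : ℝ × ℝ) :
    ∃ α : ℝ → ℝ × ℝ, α 0 = x₀ ∧ ∀ t : ℝ, HasDerivAt α (ppV (α t)) t := by
  -- solutions on each Ioo (-(n+1)) (n+1)
  have hsol : ∀ n : ℕ, ∃ f : ℝ → ℝ × ℝ, f 0 = x₀ ∧
      ∀ t ∈ Ioo (-(n+1:ℝ)) (n+1), HasDerivAt f (ppV (f t)) t := by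
    intro n
    have hpl : IsPicardLindelof (fun _ => ppV) (tmin := -(n+1:ℝ)) (tmax := n+1)
        ⟨0, ⟨by nlinarith [Nat.cast_nonneg (α := ℝ) n], by positivity⟩⟩ x₀ (n+1) 0 1 2 :=
      { lipschitzOnWith := fun t _ => ppV_lipschitz.lipschitzOnWith
        continuousOn := fun x _ => continuousOn_const
        norm_le := fun t _ x _ => ppV_norm_le x
        mul_max_le := by
          simp }
    obtain ⟨f, hf0, hf⟩ := hpl.exists_eq_forall_mem_Icc_hasDerivWithinAt₀
    exact ⟨f, hf0, fun t ht =>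
      (hf t (Ioo_subset_Icc_self ht)).hasDerivAt (Icc_mem_nhds ht.1 ht.2)⟩
  choose sol hsol0 hsolD using hsol
  -- consistency
  have key : ∀ n m : ℕ, ∀ t : ℝ, t ∈ Ioo (-(n+1:ℝ)) (n+1) → t ∈ Ioo (-(m+1:ℝ)) (m+1) →
      sol n t = sol m t := by
    intro n m t htn htm
    set k := min n m with hk
    have hkn : (k:ℝ) ≤ n := by exact_mod_cast Nat.cast_le.mpr (min_le_left n m)
    have hkm : (k:ℝ) ≤ m := by exact_mod_cast Nat.cast_le.mpr (min_le_right n m)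
    have htk : t ∈ Ioo (-(k+1:ℝ)) (k+1) := by
      constructor
      · rcases le_total (k:ℝ) n with _|_
        all_goals rcases min_cases n m with ⟨h1,_⟩|⟨h1,_⟩ <;>
          simp only [hk, h1] at * <;> first | linarith [htn.1] | linarith [htm.1]
      · rcases min_cases n m with ⟨h1,_⟩|⟨h1,_⟩ <;>
          simp only [hk, h1] at * <;> first | linarith [htn.2] | linarith [htm.2]
    have h0k : (0:ℝ) ∈ Ioo (-(k+1:ℝ)) (k+1) :=
      ⟨by nlinarith [Nat.cast_nonneg (α := ℝ) k], by positivity⟩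
    have hsub_n : Ioo (-(k+1:ℝ)) (k+1) ⊆ Ioo (-(n+1:ℝ)) (n+1) :=
      Ioo_subset_Ioo (by linarith) (by linarith)
    have hsub_m : Ioo (-(k+1:ℝ)) (k+1) ⊆ Ioo (-(m+1:ℝ)) (m+1) :=
      Ioo_subset_Ioo (by linarith) (by linarith)
    exact ODE_solution_unique_of_mem_Ioo (v := fun _ => ppV) (s := fun _ => univ)
      (fun _ _ => ppV_lipschitz.lipschitzOnWith) h0k
      (fun s hs => ⟨hsolD n s (hsub_n hs), trivial⟩)
      (fun s hs => ⟨hsolD m s (hsub_m hs), trivial⟩)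
      ((hsol0 n).trans (hsol0 m).symm) htk
  -- glue
  refine ⟨fun t => sol ⌊|t|⌋₊ t, ?_, ?_⟩
  · simpa using hsol0 0
  · intro t
    set N := ⌊|t|⌋₊ + 1 with hN
    have hmem : ∀ s : ℝ, s ∈ Ioo (-(⌊|s|⌋₊+1:ℝ)) (⌊|s|⌋₊+1) := by
      intro s
      have h1 : |s| < ⌊|s|⌋₊ + 1 := Nat.lt_floor_add_one _
      rcases abs_cases s with ⟨e, _⟩ | ⟨e, _⟩ <;> constructor <;> nlinarith [abs_nonneg s]
    have htN : t ∈ Ioo (-(N+1:ℝ)) (N+1) := by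
      have := hmem t
      push_cast [hN]
      constructor
      · have := this.1; push_cast at this ⊢; linarith
      · have := this.2; push_cast at this ⊢; linarith
    have heq : ∀ s ∈ Ioo (-(N+1:ℝ)) (N+1), sol ⌊|s|⌋₊ s = sol N s := fun s hs =>
      key _ _ s (hmem s) hs
    have hev : (fun s => sol ⌊|s|⌋₊ s) =ᶠ[nhds t] sol N :=
      Filter.eventuallyEq_of_mem (isOpen_Ioo.mem_nhds htN) heq
    have hd := (hsolD N t htN).congr_of_eventuallyEq hev
    rwa [← heq t htN] at hd

end PhasePlaneConfinementAux

/-- Confinement near the centre of the phase plane: a solution of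
`ω'' = (ω² - 1)ω` on an open interval containing `0`, whose initial data
satisfy `|ω(0)| < 1` and `ω'(0)² < (ω(0)² - 1)²/2`, extends to a (twice
differentiable) solution on all of `ℝ` satisfying `|ω(τ)| < 1` and
`ω'(τ)² ≤ 1/2` everywhere. -/
theorem phase_plane_confinement (I : Set ℝ) (hIopen : IsOpen I)
    (hIconv : Convex ℝ I) (h0 : (0 : ℝ) ∈ I)
    (ω ω' : ℝ → ℝ)
    (hω : ∀ τ ∈ I, HasDerivAt ω (ω' τ) τ)
    (hode : ∀ τ ∈ I, HasDerivAt ω' ((ω τ ^ 2 - 1) * ω τ) τ)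
    (hinit1 : |ω 0| < 1)
    (hinit2 : (ω' 0) ^ 2 < (ω 0 ^ 2 - 1) ^ 2 / 2) :
    ∃ Ω Ω' : ℝ → ℝ,
      (∀ τ : ℝ, HasDerivAt Ω (Ω' τ) τ) ∧
      (∀ τ : ℝ, HasDerivAt Ω' ((Ω τ ^ 2 - 1) * Ω τ) τ) ∧
      (∀ τ ∈ I, Ω τ = ω τ) ∧
      (∀ τ : ℝ, |Ω τ| < 1 ∧ (Ω' τ) ^ 2 ≤ 1 / 2) := by
  have hOC : OrdConnected I := hIconv.ordConnected
  -- energy along ω on I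
  set e : ℝ → ℝ := fun t => ω' t ^ 2 / 2 - (ω t ^ 2 - 1) ^ 2 / 4 with he
  have hde : ∀ t ∈ I, HasDerivAt e 0 t := by
    intro t ht
    have h1 : HasDerivAt (fun s => ω' s ^ 2 / 2)
        ((2 * ω' t ^ 1 * ((ω t ^ 2 - 1) * ω t)) / 2) t := ((hode t ht).pow 2).div_const 2
    have h2 : HasDerivAt (fun s => (ω s ^ 2 - 1) ^ 2 / 4)
        ((2 * (ω t ^ 2 - 1) ^ 1 * (2 * ω t ^ 1 * ω' t)) / 4) t :=
      ((((hω t ht).pow 2).sub_const 1).pow 2).div_const 4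
    have := h1.fun_sub h2
    exact this.congr_deriv (by ring)
  have hecon : ∀ τ ∈ I, e τ = e 0 := by
    intro τ hτ
    rcases le_total 0 τ with h | h
    · have hsub : Icc 0 τ ⊆ I := hOC.out h0 hτ
      exact constant_of_has_deriv_right_zero
        (fun t ht => (hde t (hsub ht)).continuousAt.continuousWithinAt)
        (fun t ht => (hde t (hsub (Ico_subset_Icc_self ht))).hasDerivWithinAt)
        τ (by constructor <;> linarith)
    · have hsub : Icc τ 0 ⊆ I := hOC.out hτ h0
      exact (constant_of_has_deriv_right_zero
        (fun t ht => (hde t (hsub ht)).continuousAt.continuousWithinAt)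
        (fun t ht => (hde t (hsub (Ico_subset_Icc_self ht))).hasDerivWithinAt)
        0 (by constructor <;> linarith)).symm
  have he0 : e 0 < 0 := by simp only [he]; nlinarith
  have hlt : ∀ τ ∈ I, ω τ ^ 2 < 1 := by
    intro τ hτ
    by_contra hcon
    push_neg at hcon
    have hne : ∀ s ∈ I, ω s ^ 2 ≠ 1 := by
      intro s hs heq
      have := hecon s hs
      simp only [he] at this
      nlinarith [sq_nonneg (ω' s)]
    have h1 : 1 < ω τ ^ 2 := lt_of_le_of_ne hcon (fun hh => hne τ hτ hh.symm)
    have h2 : ω 0 ^ 2 < 1 := by nlinarith [abs_nonneg (ω 0), sq_abs (ω 0)]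
    rcases le_total 0 τ with h | h
    · have hsub : Icc 0 τ ⊆ I := hOC.out h0 hτ
      have hg : ContinuousOn (fun s => ω s ^ 2) (Icc 0 τ) := fun t ht =>
        (((hω t (hsub ht)).continuousAt).pow 2).continuousWithinAt
      obtain ⟨s, hs, hgs⟩ := intermediate_value_Icc h hg ⟨h2.le, h1.le⟩
      exact hne s (hsub hs) hgs
    · have hsub : Icc τ 0 ⊆ I := hOC.out hτ h0
      have hg : ContinuousOn (fun s => ω s ^ 2) (Icc τ 0) := fun t ht =>
        (((hω t (hsub ht)).continuousAt).pow 2).continuousWithinAt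
      obtain ⟨s, hs, hgs⟩ := intermediate_value_Icc' h hg ⟨h2.le, h1.le⟩
      exact hne s (hsub hs) hgs
  have hbnd : ∀ τ ∈ I, |ω τ| ≤ 1 ∧ |ω' τ| ≤ 1 := by
    intro τ hτ
    have h1 := hlt τ hτ
    have h2 := hecon τ hτ
    simp only [he] at h2
    constructor
    · rw [abs_le]; constructor <;> nlinarith
    · rw [abs_le]
      constructor <;> nlinarith [sq_nonneg (ω τ ^ 2 - 1), sq_nonneg (ω' τ)]
  -- ω as solution of the truncated system
  set P : ℝ → ℝ × ℝ := fun t => (ω t, ω' t) with hP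
  have hPD : ∀ t ∈ I, HasDerivAt P (ppV (P t)) t := by
    intro t ht
    have := (hω t ht).prodMk (hode t ht)
    have heq : ppV (P t) = (ω' t, (ω t ^ 2 - 1) * ω t) := by
      have hb := hbnd t ht
      rw [Prod.ext_iff, ppV_fst, ppV_snd]
      exact ⟨ppCl_eq _ hb.2, ppF_eq _ hb.1⟩
    rw [heq]
    exact this
  -- global solution of truncated system
  obtain ⟨α, hα0, hαD⟩ := ppV_global_sol (ω 0, ω' 0)
  -- global energy conservation
  set Efun : ℝ → ℝ := fun t => ppG ((α t).2) - ppU ((α t).1) with hEf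
  have hEd : ∀ t, HasDerivAt Efun 0 t := by
    intro t
    have h1 : HasDerivAt (fun s => ppG ((α s).2)) (ppCl ((α t).2) * ppF ((α t).1)) t := by
      have := (ppG_deriv ((α t).2)).comp t ((hαD t).snd)
      rwa [ppV_snd] at this
    have h2 : HasDerivAt (fun s => ppU ((α s).1)) (ppF ((α t).1) * ppCl ((α t).2)) t := by
      have := (ppU_deriv ((α t).1)).comp t ((hαD t).fst)
      rwa [ppV_fst] at this
    have := h1.fun_sub h2
    exact this.congr_deriv (by ring)
  have hEconst : ∀ t, Efun t = Efun 0 := fun t =>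
    is_const_of_deriv_eq_zero (fun x => (hEd x).differentiableAt)
      (fun x => (hEd x).deriv) t 0
  have hB1 : |ω' 0| ≤ 1 := (hbnd 0 h0).2
  have hE0 : Efun 0 < 1 / 4 := by
    simp only [hEf, hα0]
    rw [ppG_eval hB1, ppU_eval hinit1.le]
    nlinarith
  -- confinement
  have hconf : ∀ t, |(α t).1| < 1 ∧ |(α t).2| ≤ 1 ∧ ((α t).2) ^ 2 ≤ 1 / 2 := by
    intro t
    have hEt : Efun t < 1 / 4 := (hEconst t).trans_lt hE0
    have h1 : |(α t).1| < 1 := by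
      by_contra hcon
      push_neg at hcon
      have := ppU_const hcon
      simp only [hEf] at hEt
      rw [this] at hEt
      nlinarith [ppG_nonneg ((α t).2)]
    have hGlt : ppG ((α t).2) < 1 / 4 := by
      simp only [hEf] at hEt
      nlinarith [ppU_nonpos (u := (α t).1)]
    have h2 : |(α t).2| ≤ 1 := by
      by_contra hcon
      push_neg at hcon
      nlinarith [ppG_ge hcon.le]
    refine ⟨h1, h2, ?_⟩
    rw [ppG_eval h2] at hGlt
    nlinarith
  -- α solves the original system
  have hαD1 : ∀ t, HasDerivAt (fun s => (α s).1) ((α t).2) t := by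
    intro t
    have h : HasDerivAt (fun s => (α s).1) ((ppV (α t)).1) t := (hαD t).fst
    rwa [ppV_fst, ppCl_eq _ (hconf t).2.1] at h
  have hαD2 : ∀ t, HasDerivAt (fun s => (α s).2) (((α t).1 ^ 2 - 1) * (α t).1) t := by
    intro t
    have h : HasDerivAt (fun s => (α s).2) ((ppV (α t)).2) t := (hαD t).snd
    rwa [ppV_snd, ppF_eq _ (hconf t).1.le] at h
  -- matching on I
  have hmatch : ∀ τ ∈ I, α τ = P τ := by
    intro τ hτ
    rcases le_total 0 τ with h | h
    · have hsub : Icc 0 τ ⊆ I := hOC.out h0 hτ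
      have := ODE_solution_unique (v := fun _ => ppV) (K := 2) (a := 0) (b := τ)
        (fun _ => ppV_lipschitz)
        (fun t ht => (hαD t).continuousAt.continuousWithinAt)
        (fun t ht => (hαD t).hasDerivWithinAt)
        (fun t ht => (hPD t (hsub ht)).continuousAt.continuousWithinAt)
        (fun t ht => (hPD t (hsub (Ico_subset_Icc_self ht))).hasDerivWithinAt)
        (by rw [hα0])
      exact this (right_mem_Icc.mpr h)
    · have hsub : Icc τ 0 ⊆ I := hOC.out hτ h0
      have := ODE_solution_unique_of_mem_Icc_left (v := fun _ => ppV) (K := 2)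
        (s := fun _ => univ) (a := τ) (b := 0)
        (fun _ _ => ppV_lipschitz.lipschitzOnWith)
        (fun t ht => (hαD t).continuousAt.continuousWithinAt)
        (fun t ht => (hαD t).hasDerivWithinAt)
        (fun _ _ => trivial)
        (fun t ht => (hPD t (hsub ht)).continuousAt.continuousWithinAt)
        (fun t ht => (hPD t (hsub (Ioc_subset_Icc_self ht))).hasDerivWithinAt)
        (fun _ _ => trivial)
        (by rw [hα0])
      exact this (left_mem_Icc.mpr h)
  exact ⟨fun t => (α t).1, fun t => (α t).2, hαD1, hαD2,
    fun τ hτ => congrArg Prod.fst (hmatch τ hτ),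
    fun t => ⟨(hconf t).1, (hconf t).2.2⟩⟩
end

section
/- Classification of solutions of the linearized equation at ξ = 0: Let r_h > 0 and let η : (r_h, ∞) → ℝ be differentiable with r·(r_h³ − r³)·η'(r) = (r_h³ + 2r³)·η(r) for all r > r_h. Then there exists a constant A ∈ ℝ such that η(r) = A·r/(r³ − r_h³) for all r > r_h. Consequently, if η is bounded on (r_h, r_h + 1), then η is identically zero on (r_h, ∞). -/
open Set

/-- Classification of solutions of the linearized equation at `ξ = 0`:
any differentiable solution of `r(r_h³ - r³)η' = (r_h³ + 2r³)η` on `(r_h, ∞)`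
is of the form `η(r) = A·r/(r³ - r_h³)`; consequently, if `η` is bounded near
the horizon, it vanishes identically. -/
theorem linearized_eta_classification (rh : ℝ) (hrh : 0 < rh)
    (η : ℝ → ℝ)
    (hdiff : ∀ r ∈ Ioi rh, DifferentiableAt ℝ η r)
    (hode : ∀ r ∈ Ioi rh, r * (rh ^ 3 - r ^ 3) * deriv η r
      = (rh ^ 3 + 2 * r ^ 3) * η r) :
    (∃ A : ℝ, ∀ r ∈ Ioi rh, η r = A * r / (r ^ 3 - rh ^ 3)) ∧
    ((∃ C : ℝ, ∀ r ∈ Ioo rh (rh + 1), |η r| ≤ C) →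
      ∀ r ∈ Ioi rh, η r = 0) := by
  set g : ℝ → ℝ := fun r => η r * (r ^ 3 - rh ^ 3) / r with hg
  have hg0 : ∀ r ∈ Ioi rh, HasDerivAt g 0 r := by
    intro r hr
    have hr' : rh < r := hr
    have hr0 : (0:ℝ) < r := lt_trans hrh hr'
    have hη : HasDerivAt η (deriv η r) r := (hdiff r hr).hasDerivAt
    have h1 : HasDerivAt (fun r : ℝ => r ^ 3 - rh ^ 3) (3 * r ^ 2) r := by
      simpa using (hasDerivAt_pow 3 r).sub_const (rh ^ 3)
    have hmul := hη.mul h1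
    have hdiv := hmul.div (hasDerivAt_id r) (ne_of_gt hr0)
    convert hdiv using 1
    case e'_4 => rfl
    case e'_5 => rfl
    case e'_8 => rfl
    have hode' := hode r hr
    rw [eq_comm, div_eq_zero_iff]; left; simp only [id, Pi.mul_apply]
    ring_nf
    ring_nf at hode'
    nlinarith [hode', sq_nonneg r]
  have hconv : Convex ℝ (Ioi rh) := convex_Ioi rh
  have hgd : DifferentiableOn ℝ g (Ioi rh) := fun r hr =>
    ((hg0 r hr).differentiableAt).differentiableWithinAt
  have hf' : ∀ x ∈ Ioi rh, fderivWithin ℝ g (Ioi rh) x = 0 := by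
    intro x hx
    rw [fderivWithin_of_isOpen isOpen_Ioi hx]
    have := (hg0 x hx).hasFDerivAt.fderiv
    rw [this]
    ext y
    simp
  have hmem : rh + 1 ∈ Ioi rh := by simp
  set A := g (rh + 1) with hA
  have hconst : ∀ r ∈ Ioi rh, g r = A :=
    fun r hr => hconv.is_const_of_fderivWithin_eq_zero hgd hf' hr hmem
  have hform : ∀ r ∈ Ioi rh, η r = A * r / (r ^ 3 - rh ^ 3) := by
    intro r hr
    have hr' : rh < r := hr
    have hr0 : (0:ℝ) < r := lt_trans hrh hr'
    have hden : (0:ℝ) < r ^ 3 - rh ^ 3 :=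
      sub_pos.mpr (pow_lt_pow_left₀ hr' hrh.le (by norm_num))
    have := hconst r hr
    rw [hg] at this
    field_simp at this ⊢
    linarith [this]
  refine ⟨⟨A, hform⟩, ?_⟩
  rintro ⟨C, hC⟩ r hr
  have hA0 : A = 0 := by
    by_contra hAne
    have hApos : 0 < |A| := abs_pos.mpr hAne
    set D : ℝ := |A| * rh / (|C| + 1) with hD
    have hCpos : (0:ℝ) < |C| + 1 := by positivity
    have hDpos : 0 < D := by positivity
    set δ : ℝ := min (1/2) (D / (3 * rh ^ 2 + 3 * rh + 1)) with hδ
    have hQ : (0:ℝ) < 3 * rh ^ 2 + 3 * rh + 1 := by positivity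
    have hδpos : 0 < δ := lt_min (by norm_num) (by positivity)
    have hδle : δ ≤ 1/2 := min_le_left _ _
    have hδle2 : δ ≤ D / (3 * rh ^ 2 + 3 * rh + 1) := min_le_right _ _
    set r0 : ℝ := rh + δ with hr0def
    have hr0mem : r0 ∈ Ioo rh (rh + 1) := ⟨by linarith, by linarith⟩
    have hr0pos : (0:ℝ) < r0 := by linarith
    have hdenpos : (0:ℝ) < r0 ^ 3 - rh ^ 3 :=
      sub_pos.mpr (pow_lt_pow_left₀ hr0mem.1 hrh.le (by norm_num))
    have hdenle : r0 ^ 3 - rh ^ 3 ≤ D := by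
      have h1 : r0 ^ 3 - rh ^ 3 ≤ δ * (3 * rh ^ 2 + 3 * rh + 1) := by
        have hδ1 : δ ≤ 1 := by linarith
        have hδ2 : δ ^ 2 ≤ δ := by nlinarith
        have hδ3 : δ ^ 3 ≤ δ := by nlinarith [sq_nonneg δ]
        have he : r0 ^ 3 - rh ^ 3 = 3 * rh ^ 2 * δ + 3 * rh * δ ^ 2 + δ ^ 3 := by
          rw [hr0def]; ring
        rw [he]
        nlinarith [mul_le_mul_of_nonneg_left hδ2 hrh.le, hδ3]
      calc r0 ^ 3 - rh ^ 3 ≤ δ * (3 * rh ^ 2 + 3 * rh + 1) := h1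
        _ ≤ D / (3 * rh ^ 2 + 3 * rh + 1) * (3 * rh ^ 2 + 3 * rh + 1) := by
            exact mul_le_mul_of_nonneg_right hδle2 (le_of_lt hQ)
        _ = D := by field_simp
    have hval : η r0 = A * r0 / (r0 ^ 3 - rh ^ 3) := hform r0 (hr0mem.1)
    have habs : |η r0| = |A| * r0 / (r0 ^ 3 - rh ^ 3) := by
      rw [hval, abs_div, abs_mul, abs_of_pos hr0pos, abs_of_pos hdenpos]
    have hlow : |C| + 1 ≤ |η r0| := by
      rw [habs, le_div_iff₀ hdenpos]
      have h2 : (|C| + 1) * (r0 ^ 3 - rh ^ 3) ≤ (|C| + 1) * D :=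
        mul_le_mul_of_nonneg_left hdenle (le_of_lt hCpos)
      have h3 : (|C| + 1) * D = |A| * rh := by
        rw [hD]; field_simp
      have h4 : |A| * rh ≤ |A| * r0 := by
        apply mul_le_mul_of_nonneg_left _ (le_of_lt hApos)
        linarith
      linarith
    have hhi : |η r0| ≤ C := hC r0 hr0mem
    have : C ≤ |C| := le_abs_self C
    linarith
  rw [hform r hr, hA0]
  simp
end
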